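/- arXiv:math/0607036 — 4 statements merged into one kernel-verified Lean document; each statement's English description precedes it below -/
import Mathlib

section
/- Given any subdistributions H₀, H₁, H₂ with H = H₀+H₁+H₂ a probability distribution on [0,∞], the distributions F₁^{II} and F₀₂^{II} obtained from the predictable hazard measures L₀₂⁻(dt) = H₀₂(dt)/H([t,∞]) and L₁⁻(dt) = H₁(dt)/(H((t,∞]) + H₁({t})) satisfy the factorization H((t,∞]) = F₁^{II}((t,∞]) F₀₂^{II}((t,∞]) for all t. -/
open MeasureTheory Set ENNReal Filter Topology

namespace ModelII

lemma meas_Ici (μ : Measure ℝ≥0∞) : Measurable fun s => μ (Ici s) :=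
  Antitone.measurable fun _ _ h => measure_mono (Ici_subset_Ici.2 h)

lemma meas_Ioi (μ : Measure ℝ≥0∞) : Measurable fun s => μ (Ioi s) :=
  Antitone.measurable fun _ _ h => measure_mono (Ioi_subset_Ioi h)

lemma Ici_decomp (μ : Measure ℝ≥0∞) (s : ℝ≥0∞) : μ (Ici s) = μ {s} + μ (Ioi s) := by
  have h : Ici s = {s} ∪ Ioi s := by
    ext x; simp [le_iff_lt_or_eq, eq_comm, or_comm]
  rw [h, measure_union (by simp [Set.disjoint_left]) measurableSet_Ioi]

lemma meas_singleton (μ : Measure ℝ≥0∞) [IsFiniteMeasure μ] :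
    Measurable fun s => μ {s} := by
  have h : (fun s => μ {s}) = fun s => μ (Ici s) - μ (Ioi s) := by
    funext s
    rw [Ici_decomp μ s, ENNReal.add_sub_cancel_right (measure_ne_top μ _)]
  rw [h]
  exact (meas_Ici μ).sub (meas_Ioi μ)

lemma aepos (μ : Measure ℝ≥0∞) : ∀ᵐ s ∂μ, μ (Ici s) ≠ 0 := by
  rw [ae_iff]
  simp only [not_ne_iff]
  set A := {s | μ (Ici s) = 0} with hA
  rcases eq_empty_or_nonempty A with h | h
  · simp only [← hA, h, measure_empty]
  · obtain ⟨u, hmono, hlim, hmem⟩ := exists_seq_tendsto_sInf h (OrderBot.bddBelow A)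
    have hsub : A ⊆ ({sInf A} ∩ A) ∪ ⋃ n, Ici (u n) := by
      intro y hy
      rcases eq_or_lt_of_le (csInf_le (OrderBot.bddBelow A) hy) with h1 | h1
      · exact Or.inl ⟨h1.symm, hy⟩
      · have : ∀ᶠ n in atTop, u n < y := hlim.eventually (eventually_lt_nhds h1)
        obtain ⟨n, hn⟩ := this.exists
        exact Or.inr (mem_iUnion.2 ⟨n, hn.le⟩)
    refine measure_mono_null hsub (le_antisymm ?_ (zero_le))
    refine le_trans (measure_union_le _ _) ?_
    have h1 : μ ({sInf A} ∩ A) = 0 := by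
      by_cases hsi : sInf A ∈ A
      · refine measure_mono_null (fun x hx => ?_) hsi
        rcases hx with ⟨hx1, _⟩
        simp only [mem_singleton_iff] at hx1
        subst hx1; exact self_mem_Ici
      · have : ({sInf A} ∩ A) = ∅ := by
          ext x; simp only [mem_inter_iff, mem_singleton_iff, mem_empty_iff_false, iff_false]
          rintro ⟨rfl, hx⟩; exact hsi hx
        simp [this]
    have h2 : μ (⋃ n, Ici (u n)) = 0 := measure_iUnion_null fun n => hmem n
    simp [h1, h2]

lemma tendsto_Ioi_Ici (μ : Measure ℝ≥0∞) [IsFiniteMeasure μ] {u : ℕ → ℝ≥0∞} {x : ℝ≥0∞}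
    (hu : ∀ n, u n < x) (hmono : Monotone u) (hlim : Tendsto u atTop (𝓝 x)) :
    Tendsto (fun n => μ (Ioi (u n))) atTop (𝓝 (μ (Ici x))) := by
  have h1 : ⋂ n, Ioi (u n) = Ici x := by
    ext y
    simp only [mem_iInter, mem_Ioi, mem_Ici]
    constructor
    · intro h
      exact le_of_tendsto hlim (Eventually.of_forall fun n => (h n).le)
    · intro h n
      exact lt_of_lt_of_le (hu n) h
  have := tendsto_measure_iInter_atTop (μ := μ) (s := fun n => Ioi (u n))
    (fun n => measurableSet_Ioi.nullMeasurableSet)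
    (fun m n hmn => Ioi_subset_Ioi (hmono hmn)) ⟨0, measure_ne_top _ _⟩
  rwa [h1] at this

lemma lim_le_lim (H F1 F02 : Measure ℝ≥0∞) [IsFiniteMeasure H] [IsFiniteMeasure F1]
    [IsFiniteMeasure F02] {x : ℝ≥0∞} (hx : 0 < x) (r : ℝ≥0∞)
    (h : ∀ u, u < x → H (Ioi u) ≤ F1 (Ioi u) * F02 (Ioi u) + r) :
    H (Ici x) ≤ F1 (Ici x) * F02 (Ici x) + r := by
  obtain ⟨u, hsm, hmem, hlim⟩ := exists_seq_strictMono_tendsto' hx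
  have tH := tendsto_Ioi_Ici H (fun n => (hmem n).2) hsm.monotone hlim
  have t1 := tendsto_Ioi_Ici F1 (fun n => (hmem n).2) hsm.monotone hlim
  have t02 := tendsto_Ioi_Ici F02 (fun n => (hmem n).2) hsm.monotone hlim
  have tmul : Tendsto (fun n => F1 (Ioi (u n)) * F02 (Ioi (u n)) + r) atTop
      (𝓝 (F1 (Ici x) * F02 (Ici x) + r)) := by
    refine Tendsto.add ?_ tendsto_const_nhds
    exact ENNReal.Tendsto.mul t1 (Or.inr (measure_ne_top _ _)) t02 (Or.inr (measure_ne_top _ _))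
  exact le_of_tendsto_of_tendsto' tH tmul fun n => h (u n) (hmem n).2

lemma lim_le_lim' (H F1 F02 : Measure ℝ≥0∞) [IsFiniteMeasure H] [IsFiniteMeasure F1]
    [IsFiniteMeasure F02] {x : ℝ≥0∞} (hx : 0 < x) (r : ℝ≥0∞)
    (h : ∀ u, u < x → F1 (Ioi u) * F02 (Ioi u) ≤ H (Ioi u) + r) :
    F1 (Ici x) * F02 (Ici x) ≤ H (Ici x) + r := by
  obtain ⟨u, hsm, hmem, hlim⟩ := exists_seq_strictMono_tendsto' hx
  have tH := tendsto_Ioi_Ici H (fun n => (hmem n).2) hsm.monotone hlim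
  have t1 := tendsto_Ioi_Ici F1 (fun n => (hmem n).2) hsm.monotone hlim
  have t02 := tendsto_Ioi_Ici F02 (fun n => (hmem n).2) hsm.monotone hlim
  have tmul : Tendsto (fun n => F1 (Ioi (u n)) * F02 (Ioi (u n))) atTop
      (𝓝 (F1 (Ici x) * F02 (Ici x))) :=
    ENNReal.Tendsto.mul t1 (Or.inr (measure_ne_top _ _)) t02 (Or.inr (measure_ne_top _ _))
  exact le_of_tendsto_of_tendsto' tmul (tH.add tendsto_const_nhds) fun n => h (u n) (hmem n).2

lemma fubini_split (F1 F02 : Measure ℝ≥0∞) [IsProbabilityMeasure F1] [IsProbabilityMeasure F02]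
    (s : ℝ≥0∞) :
    1 = F1 (Ioi s) * F02 (Ioi s)
        + (∫⁻ x in Iic s, F02 (Ici x) ∂F1 + ∫⁻ x in Iic s, F1 (Ioi x) ∂F02) := by
  set P1 : Set (ℝ≥0∞ × ℝ≥0∞) := {p | p.1 ≤ s ∧ p.1 ≤ p.2} with hP1
  set P2 : Set (ℝ≥0∞ × ℝ≥0∞) := {p | p.2 ≤ s ∧ p.2 < p.1} with hP2
  set P3 : Set (ℝ≥0∞ × ℝ≥0∞) := Ioi s ×ˢ Ioi s with hP3
  have hmP1 : MeasurableSet P1 := (measurable_fst measurableSet_Iic).inter measurableSet_le'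
  have hmP2 : MeasurableSet P2 := (measurable_snd measurableSet_Iic).inter
    ((measurable_snd.prodMk measurable_fst) measurableSet_lt')
  have hmP3 : MeasurableSet P3 := measurableSet_Ioi.prod measurableSet_Ioi
  have hdisj12 : Disjoint P1 P2 := by
    rw [Set.disjoint_left]; rintro p ⟨_, h2⟩ ⟨_, h4⟩; exact absurd h2 (not_le.2 h4)
  have hdisj3 : Disjoint (P1 ∪ P2) P3 := by
    rw [Set.disjoint_left]; rintro p hp ⟨hq1, hq2⟩
    rcases hp with ⟨h1, _⟩ | ⟨h1, _⟩
    · exact absurd hq1 (not_lt.2 h1)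
    · exact absurd hq2 (not_lt.2 h1)
  have hcover : P1 ∪ P2 ∪ P3 = univ := by
    ext p
    simp only [hP1, hP2, hP3, mem_union, mem_univ, iff_true, mem_setOf_eq, mem_prod, mem_Ioi]
    by_cases h1 : p.1 ≤ s
    · by_cases h2 : p.1 ≤ p.2
      · exact Or.inl (Or.inl ⟨h1, h2⟩)
      · exact Or.inl (Or.inr ⟨le_trans (not_le.1 h2).le h1, not_le.1 h2⟩)
    · by_cases h2 : p.2 ≤ s
      · exact Or.inl (Or.inr ⟨h2, lt_of_le_of_lt h2 (not_le.1 h1)⟩)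
      · exact Or.inr ⟨not_le.1 h1, not_le.1 h2⟩
  have htot : (F1.prod F02) (P1 ∪ P2 ∪ P3) = 1 := by rw [hcover]; simp
  rw [measure_union hdisj3 hmP3, measure_union hdisj12 hmP2] at htot
  have e3 : (F1.prod F02) P3 = F1 (Ioi s) * F02 (Ioi s) := Measure.prod_prod _ _
  have e1 : (F1.prod F02) P1 = ∫⁻ x in Iic s, F02 (Ici x) ∂F1 := by
    rw [Measure.prod_apply hmP1, ← lintegral_indicator measurableSet_Iic _]
    refine lintegral_congr fun x => ?_
    by_cases hx : x ≤ s
    · have h : Prod.mk x ⁻¹' P1 = Ici x := by ext y; simp [hP1, hx]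
      simp [h, hx]
    · have h : Prod.mk x ⁻¹' P1 = ∅ := by ext y; simp [hP1, hx]
      simp [h, hx]
  have e2 : (F1.prod F02) P2 = ∫⁻ x in Iic s, F1 (Ioi x) ∂F02 := by
    rw [Measure.prod_apply_symm hmP2, ← lintegral_indicator measurableSet_Iic _]
    refine lintegral_congr fun y => ?_
    by_cases hy : y ≤ s
    · have h : (fun x => (x, y)) ⁻¹' P2 = Ioi y := by ext x; simp [hP2, hy]
      simp [h, hy]
    · have h : (fun x => (x, y)) ⁻¹' P2 = ∅ := by ext x; simp [hP2, hy]
      simp [h, hy]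
  rw [e1, e2, e3] at htot
  rw [← htot]; ring

lemma fubini_diag (F1 F02 : Measure ℝ≥0∞) [SFinite F1] [SFinite F02] (s : ℝ≥0∞) :
    ∫⁻ x in Iic s, F1 {x} ∂F02 = ∫⁻ x in Iic s, F02 {x} ∂F1 := by
  set Q : Set (ℝ≥0∞ × ℝ≥0∞) := {p | p.2 ≤ s ∧ p.1 = p.2} with hQ
  have hmQ : MeasurableSet Q := by
    have hm : MeasurableSet (((Prod.snd ⁻¹' Iic s) ∩ {p : ℝ≥0∞ × ℝ≥0∞ | p.1 ≤ p.2}) \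
        {p : ℝ≥0∞ × ℝ≥0∞ | p.1 < p.2}) :=
      ((measurable_snd measurableSet_Iic).inter measurableSet_le').diff measurableSet_lt'
    refine hm.congr ?_
    ext p
    simp only [hQ, mem_diff, mem_inter_iff, mem_setOf_eq, mem_preimage, mem_Iic]
    constructor
    · rintro ⟨⟨h1, h2⟩, h3⟩
      exact ⟨h1, le_antisymm h2 (not_lt.1 h3)⟩
    · rintro ⟨h1, h2⟩
      exact ⟨⟨h1, h2.le⟩, by simp [h2]⟩
  have e1 : (F1.prod F02) Q = ∫⁻ x in Iic s, F1 {x} ∂F02 := by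
    rw [Measure.prod_apply_symm hmQ, ← lintegral_indicator measurableSet_Iic _]
    refine lintegral_congr fun y => ?_
    by_cases hy : y ≤ s
    · have h : (fun x => (x, y)) ⁻¹' Q = {y} := by ext x; simp [hQ, hy]
      simp [h, hy]
    · have h : (fun x => (x, y)) ⁻¹' Q = ∅ := by ext x; simp [hQ, hy]
      simp [h, hy]
  have e2 : (F1.prod F02) Q = ∫⁻ x in Iic s, F02 {x} ∂F1 := by
    rw [Measure.prod_apply hmQ, ← lintegral_indicator measurableSet_Iic _]
    refine lintegral_congr fun x => ?_
    by_cases hx : x ≤ s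
    · have h : Prod.mk x ⁻¹' Q = {x} := by
        ext y
        simp only [hQ, mem_preimage, mem_setOf_eq, mem_singleton_iff]
        constructor
        · rintro ⟨_, h2⟩; exact h2.symm
        · rintro rfl; exact ⟨hx, rfl⟩
      simp [h, hx]
    · have h : Prod.mk x ⁻¹' Q = ∅ := by
        ext y
        simp only [hQ, mem_preimage, mem_setOf_eq, mem_empty_iff_false, iff_false, not_and]
        intro hy heq
        exact hx (heq ▸ hy)
      simp [h, hx]
  rw [← e1, e2]

lemma mul_inv_self_le_one (a : ℝ≥0∞) : a * a⁻¹ ≤ 1 := by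
  rcases eq_or_ne a 0 with rfl | h0
  · simp
  rcases eq_or_ne a ⊤ with rfl | ht
  · simp
  rw [ENNReal.mul_inv_cancel h0 ht]

end ModelII

open ModelII in
/-- for any subdistributions `H₀, H₁, H₂` summing to a probability `H` on
`[0,∞]`, the distributions `F₀₂^{II}` and `F₁^{II}` associated with the predictable
hazard measures `L₀₂⁻(dt) = H₀₂(dt)/H([t,∞])` and
`L₁⁻(dt) = H₁(dt)/(H((t,∞]) + H₁({t}))` satisfy
`H((t,∞]) = F₁^{II}((t,∞]) F₀₂^{II}((t,∞])` for all `t`. -/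
theorem modelII_factorization (H0 H1 H2 : Measure ℝ≥0∞)
    [IsProbabilityMeasure (H0 + H1 + H2)]
    (F02 F1 : Measure ℝ≥0∞) [IsProbabilityMeasure F02] [IsProbabilityMeasure F1]
    (hF02 : ∀ B, MeasurableSet B →
      ∫⁻ s in B, (F02 (Ici s))⁻¹ ∂F02 = ∫⁻ s in B, ((H0 + H1 + H2) (Ici s))⁻¹ ∂(H0 + H2))
    (hF1 : ∀ B, MeasurableSet B →
      ∫⁻ s in B, (F1 (Ici s))⁻¹ ∂F1
        = ∫⁻ s in B, ((H0 + H1 + H2) (Ioi s) + H1 {s})⁻¹ ∂H1) :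
    ∀ t, (H0 + H1 + H2) (Ioi t) = F1 (Ioi t) * F02 (Ioi t) := by
  intro t
  classical
  set H : Measure ℝ≥0∞ := H0 + H1 + H2 with hHdef
  set Q : Measure ℝ≥0∞ := H0 + H2 with hQdef
  haveI hPH : IsProbabilityMeasure H := by rw [hHdef]; infer_instance
  have hQle : ∀ B, Q B ≤ H B := by
    intro B
    rw [hHdef, hQdef]
    simp only [Measure.add_apply]
    exact add_le_add_left (self_le_add_right (H0 B) (H1 B)) (H2 B)
  have hH1le : ∀ B, H1 B ≤ H B := by
    intro B
    rw [hHdef]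
    simp only [Measure.add_apply]
    exact (self_le_add_left (H1 B) (H0 B)).trans (self_le_add_right _ (H2 B))
  haveI hfH1 : IsFiniteMeasure H1 :=
    ⟨lt_of_le_of_lt (hH1le univ) (by rw [measure_univ]; exact one_lt_top)⟩
  haveI hfQ : IsFiniteMeasure Q :=
    ⟨lt_of_le_of_lt (hQle univ) (by rw [measure_univ]; exact one_lt_top)⟩
  -- hazard measures
  set L1 : Measure ℝ≥0∞ := F1.withDensity (fun s => (F1 (Ici s))⁻¹) with hL1def
  set L02 : Measure ℝ≥0∞ := F02.withDensity (fun s => (F02 (Ici s))⁻¹) with hL02def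
  have eq1 : L1 = H1.withDensity (fun s => (H (Ioi s) + H1 {s})⁻¹) := by
    refine Measure.ext fun B hB => ?_
    rw [hL1def, withDensity_apply _ hB, withDensity_apply _ hB]
    exact hF1 B hB
  have eq02 : L02 = Q.withDensity (fun s => (H (Ici s))⁻¹) := by
    refine Measure.ext fun B hB => ?_
    rw [hL02def, withDensity_apply _ hB, withDensity_apply _ hB]
    exact hF02 B hB
  -- measurability
  have mC1 : Measurable fun s => F1 (Ici s) := meas_Ici F1
  have mC02 : Measurable fun s => F02 (Ici s) := meas_Ici F02
  have mCH : Measurable fun s => H (Ici s) := meas_Ici H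
  have mS1 : Measurable fun s => F1 (Ioi s) := meas_Ioi F1
  have mSH : Measurable fun s => H (Ioi s) := meas_Ioi H
  have ma1 : Measurable fun s => H1 {s} := meas_singleton H1
  have maQ : Measurable fun s => Q {s} := meas_singleton Q
  have maF1 : Measurable fun s => F1 {s} := meas_singleton F1
  have mden1 : Measurable fun s => H (Ioi s) + H1 {s} := mSH.add ma1
  have mpreK : Measurable fun s => F1 (Ici s) * F02 (Ici s) := mC1.mul mC02
  have ma02 : Measurable fun s => Q {s} * (H (Ici s))⁻¹ := maQ.mul mCH.inv
  -- a.e. cancelation facts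
  have aeF1 : ∀ᵐ x ∂F1, (F1 (Ici x))⁻¹ * F1 (Ici x) = 1 := by
    filter_upwards [aepos F1] with x hx
    exact ENNReal.inv_mul_cancel hx (measure_ne_top _ _)
  have aeF02 : ∀ᵐ x ∂F02, (F02 (Ici x))⁻¹ * F02 (Ici x) = 1 := by
    filter_upwards [aepos F02] with x hx
    exact ENNReal.inv_mul_cancel hx (measure_ne_top _ _)
  have aeH1 : ∀ᵐ x ∂H1, (H (Ioi x) + H1 {x})⁻¹ * (H (Ioi x) + H1 {x}) = 1 := by
    filter_upwards [aepos H1] with x hx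
    refine ENNReal.inv_mul_cancel (fun h0 => hx ?_) (by
      exact ENNReal.add_ne_top.2 ⟨measure_ne_top _ _, measure_ne_top _ _⟩)
    have hle : H1 (Ici x) ≤ H (Ioi x) + H1 {x} := by
      rw [Ici_decomp H1 x, add_comm]
      exact add_le_add_left (hH1le (Ioi x)) _
    exact le_antisymm (hle.trans h0.le) (zero_le)
  have aeQ : ∀ᵐ x ∂Q, (H (Ici x))⁻¹ * H (Ici x) = 1 := by
    filter_upwards [aepos Q] with x hx
    refine ENNReal.inv_mul_cancel (fun h0 => hx ?_) (measure_ne_top _ _)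
    exact le_antisymm ((hQle (Ici x)).trans h0.le) (zero_le)
  -- singleton hazard facts
  have hsingF02 : ∀ x, F02 {x} = (Q {x} * (H (Ici x))⁻¹) * F02 (Ici x) := by
    intro x
    have h := congrArg (fun m : Measure ℝ≥0∞ => m {x}) eq02
    rw [hL02def, withDensity_apply _ (measurableSet_singleton x),
      withDensity_apply _ (measurableSet_singleton x), lintegral_singleton,
      lintegral_singleton] at h
    by_cases hc : F02 (Ici x) = 0
    · have h0 : F02 {x} = 0 :=
        le_antisymm ((measure_mono (singleton_subset_iff.2 self_mem_Ici)).trans hc.le) (zero_le)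
      rw [h0, hc, mul_zero]
    · have h2 : F02 (Ici x) * ((F02 (Ici x))⁻¹ * F02 {x}) = F02 {x} := by
        rw [← mul_assoc, ENNReal.mul_inv_cancel hc (measure_ne_top _ _), one_mul]
      rw [← h2, h]; ring
  -- pointwise: Q {x} = a02 x * H (Ici x)
  have hQatom : ∀ x, Q {x} = (Q {x} * (H (Ici x))⁻¹) * H (Ici x) := by
    intro x
    by_cases hx : H (Ici x) = 0
    · have h0 : Q {x} = 0 := by
        refine le_antisymm (le_trans ?_ hx.le) (zero_le)
        exact (measure_mono (singleton_subset_iff.2 self_mem_Ici)).trans (hQle _)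
      rw [h0, zero_mul, zero_mul]
    · rw [mul_assoc, ENNReal.inv_mul_cancel hx (measure_ne_top _ _), mul_one]
  -- pointwise: H (Ici x) decomposition
  have hdecomp : ∀ x, H (Ici x) = (H (Ioi x) + H1 {x}) + Q {x} := by
    intro x
    rw [Ici_decomp H x]
    have h : H {x} = H1 {x} + Q {x} := by
      rw [hHdef, hQdef]; simp only [Measure.add_apply]; ring
    rw [h]; ring

  -- integral identities
  have iB1 : ∀ s, ∫⁻ x in Iic s, F1 (Ici x) * F02 (Ici x) ∂L1
      = ∫⁻ x in Iic s, F02 (Ici x) ∂F1 := by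
    intro s
    rw [hL1def, setLIntegral_withDensity_eq_setLIntegral_mul F1 (f := fun s => (F1 (Ici s))⁻¹) mC1.inv mpreK measurableSet_Iic]
    refine lintegral_congr_ae (ae_restrict_of_ae ?_)
    filter_upwards [aeF1] with x hx
    simp only [Pi.mul_apply]
    rw [← mul_assoc, hx, one_mul]
  have iB2 : ∀ s, ∫⁻ x in Iic s, F1 (Ici x) * F02 (Ici x) ∂L02
      = (∫⁻ x in Iic s, F1 (Ioi x) ∂F02) + ∫⁻ x in Iic s, F1 {x} ∂F02 := by
    intro s
    rw [hL02def, setLIntegral_withDensity_eq_setLIntegral_mul F02 (f := fun s => (F02 (Ici s))⁻¹) mC02.inv mpreK measurableSet_Iic]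
    have hcongr : ∫⁻ x in Iic s,
        ((fun x => (F02 (Ici x))⁻¹) * fun x => F1 (Ici x) * F02 (Ici x)) x ∂F02
        = ∫⁻ x in Iic s, F1 (Ici x) ∂F02 := by
      refine lintegral_congr_ae (ae_restrict_of_ae ?_)
      filter_upwards [aeF02] with x hx
      simp only [Pi.mul_apply]
      rw [show (F02 (Ici x))⁻¹ * (F1 (Ici x) * F02 (Ici x))
          = F1 (Ici x) * ((F02 (Ici x))⁻¹ * F02 (Ici x)) by ring, hx, mul_one]
    rw [hcongr]
    have hpt : ∫⁻ x in Iic s, F1 (Ici x) ∂F02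
        = ∫⁻ x in Iic s, (F1 (Ioi x) + F1 {x}) ∂F02 := by
      refine lintegral_congr fun x => ?_
      rw [Ici_decomp F1 x, add_comm]
    rw [hpt, lintegral_add_left mS1]
  have iA1 : ∀ s, ∫⁻ x in Iic s, H (Ici x) ∂L1
      = H1 (Iic s) + ∫⁻ x in Iic s, Q {x} ∂L1 := by
    intro s
    rw [eq1, setLIntegral_withDensity_eq_setLIntegral_mul H1 (f := fun s => (H (Ioi s) + H1 {s})⁻¹) mden1.inv mCH measurableSet_Iic,
      setLIntegral_withDensity_eq_setLIntegral_mul H1 (f := fun s => (H (Ioi s) + H1 {s})⁻¹) mden1.inv maQ measurableSet_Iic]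
    calc ∫⁻ x in Iic s, ((fun x => (H (Ioi x) + H1 {x})⁻¹) * fun x => H (Ici x)) x ∂H1
        = ∫⁻ x in Iic s, ((H (Ioi x) + H1 {x})⁻¹ * (H (Ioi x) + H1 {x})
            + (H (Ioi x) + H1 {x})⁻¹ * Q {x}) ∂H1 := lintegral_congr fun x => by
          simp only [Pi.mul_apply]; rw [hdecomp x, mul_add]
      _ = (∫⁻ x in Iic s, (H (Ioi x) + H1 {x})⁻¹ * (H (Ioi x) + H1 {x}) ∂H1)
            + ∫⁻ x in Iic s, (H (Ioi x) + H1 {x})⁻¹ * Q {x} ∂H1 :=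
          lintegral_add_left (mden1.inv.mul mden1) _
      _ = H1 (Iic s)
            + ∫⁻ x in Iic s, ((fun x => (H (Ioi x) + H1 {x})⁻¹) * fun x => Q {x}) x ∂H1 := by
          congr 1
          have h : ∫⁻ x in Iic s, (H (Ioi x) + H1 {x})⁻¹ * (H (Ioi x) + H1 {x}) ∂H1
              = ∫⁻ x in Iic s, 1 ∂H1 := by
            refine lintegral_congr_ae (ae_restrict_of_ae ?_)
            filter_upwards [aeH1] with x hx
            exact hx
          rw [h, setLIntegral_one]
  have iA2 : ∀ s, ∫⁻ x in Iic s, H (Ici x) ∂L02 = Q (Iic s) := by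
    intro s
    rw [eq02, setLIntegral_withDensity_eq_setLIntegral_mul Q (f := fun s => (H (Ici s))⁻¹) mCH.inv mCH measurableSet_Iic]
    have h : ∫⁻ x in Iic s, ((fun x => (H (Ici x))⁻¹) * fun x => H (Ici x)) x ∂Q
        = ∫⁻ x in Iic s, 1 ∂Q := by
      refine lintegral_congr_ae (ae_restrict_of_ae ?_)
      filter_upwards [aeQ] with x hx
      simp only [Pi.mul_apply]; exact hx
    rw [h, setLIntegral_one]
  have iE1 : ∀ s : ℝ≥0∞, ∫⁻ x in Iic s, Q {x} ∂L1
      = ∫⁻ x in Iic s, (Q {x} * (H (Ici x))⁻¹) * H (Ici x) ∂L1 :=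
    fun s => lintegral_congr fun x => hQatom x
  have iE2 : ∀ s, ∫⁻ x in Iic s, F1 {x} ∂F02
      = ∫⁻ x in Iic s, (Q {x} * (H (Ici x))⁻¹) * (F1 (Ici x) * F02 (Ici x)) ∂L1 := by
    intro s
    rw [fubini_diag F1 F02 s]
    have h2 : ∫⁻ x in Iic s, (Q {x} * (H (Ici x))⁻¹) * (F1 (Ici x) * F02 (Ici x)) ∂L1
        = ∫⁻ x in Iic s,
            (F1 (Ici x))⁻¹ * (F1 (Ici x) * ((Q {x} * (H (Ici x))⁻¹) * F02 (Ici x))) ∂F1 := by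
      rw [hL1def, setLIntegral_withDensity_eq_setLIntegral_mul F1 (f := fun s => (F1 (Ici s))⁻¹) mC1.inv
        (g := fun s => Q {s} * (H (Ici s))⁻¹ * (F1 (Ici s) * F02 (Ici s)))
        (ma02.mul mpreK) measurableSet_Iic]
      exact lintegral_congr fun x => by simp only [Pi.mul_apply]; ring
    rw [h2]
    refine lintegral_congr_ae (ae_restrict_of_ae ?_)
    filter_upwards [aeF1] with x hx
    have h3 : (F1 (Ici x))⁻¹ * (F1 (Ici x) * ((Q {x} * (H (Ici x))⁻¹) * F02 (Ici x)))
        = F02 {x} := by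
      rw [← mul_assoc, hx, one_mul, ← hsingF02 x]
    exact h3.symm

  set g : ℝ≥0∞ → ℝ≥0∞ := fun x =>
    (H (Ici x) - F1 (Ici x) * F02 (Ici x)) + (F1 (Ici x) * F02 (Ici x) - H (Ici x)) with hgdef
  have mg : Measurable g := (mCH.sub mpreK).add (mpreK.sub mCH)
  by_cases hz : H (Ioi t) = 0 ∧ F1 (Ioi t) * F02 (Ioi t) = 0
  · rw [hz.1, hz.2]
  · -- finiteness of hazards on [0, t]
    have hIoiIci : ∀ x : ℝ≥0∞, x ≤ t → Ioi t ⊆ Ici x := fun x hx y hy => hx.trans (le_of_lt hy)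
    have hfin : L1 (Iic t) ≠ ⊤ ∧ L02 (Iic t) ≠ ⊤ := by
      rcases not_and_or.1 hz with hG | hK
      · constructor
        · have h1 : L1 (Iic t) ≤ (H (Ioi t))⁻¹ * H1 (Iic t) := by
            rw [eq1, withDensity_apply _ measurableSet_Iic]
            calc ∫⁻ x in Iic t, (H (Ioi x) + H1 {x})⁻¹ ∂H1
                ≤ ∫⁻ _x in Iic t, (H (Ioi t))⁻¹ ∂H1 := by
                  refine setLIntegral_mono measurable_const fun x hx => ?_
                  refine ENNReal.inv_le_inv' ?_
                  exact le_trans (measure_mono (Ioi_subset_Ioi hx)) (self_le_add_right _ _)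
              _ = (H (Ioi t))⁻¹ * H1 (Iic t) := setLIntegral_const _ _
          exact ne_top_of_le_ne_top
            (ENNReal.mul_ne_top (ENNReal.inv_ne_top.2 hG) (measure_ne_top _ _)) h1
        · have h1 : L02 (Iic t) ≤ (H (Ioi t))⁻¹ * Q (Iic t) := by
            rw [eq02, withDensity_apply _ measurableSet_Iic]
            calc ∫⁻ x in Iic t, (H (Ici x))⁻¹ ∂Q
                ≤ ∫⁻ _x in Iic t, (H (Ioi t))⁻¹ ∂Q := by
                  refine setLIntegral_mono measurable_const fun x hx => ?_
                  exact ENNReal.inv_le_inv' (measure_mono (hIoiIci x hx))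
              _ = (H (Ioi t))⁻¹ * Q (Iic t) := setLIntegral_const _ _
          exact ne_top_of_le_ne_top
            (ENNReal.mul_ne_top (ENNReal.inv_ne_top.2 hG) (measure_ne_top _ _)) h1
      · obtain ⟨hK1, hK02⟩ := mul_ne_zero_iff.1 hK
        constructor
        · have h1 : L1 (Iic t) ≤ (F1 (Ioi t))⁻¹ * F1 (Iic t) := by
            rw [hL1def, withDensity_apply _ measurableSet_Iic]
            calc ∫⁻ x in Iic t, (F1 (Ici x))⁻¹ ∂F1
                ≤ ∫⁻ _x in Iic t, (F1 (Ioi t))⁻¹ ∂F1 := by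
                  refine setLIntegral_mono measurable_const fun x hx => ?_
                  exact ENNReal.inv_le_inv' (measure_mono (hIoiIci x hx))
              _ = (F1 (Ioi t))⁻¹ * F1 (Iic t) := setLIntegral_const _ _
          exact ne_top_of_le_ne_top
            (ENNReal.mul_ne_top (ENNReal.inv_ne_top.2 hK1) (measure_ne_top _ _)) h1
        · have h1 : L02 (Iic t) ≤ (F02 (Ioi t))⁻¹ * F02 (Iic t) := by
            rw [hL02def, withDensity_apply _ measurableSet_Iic]
            calc ∫⁻ x in Iic t, (F02 (Ici x))⁻¹ ∂F02
                ≤ ∫⁻ _x in Iic t, (F02 (Ioi t))⁻¹ ∂F02 := by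
                  refine setLIntegral_mono measurable_const fun x hx => ?_
                  exact ENNReal.inv_le_inv' (measure_mono (hIoiIci x hx))
              _ = (F02 (Ioi t))⁻¹ * F02 (Iic t) := setLIntegral_const _ _
          exact ne_top_of_le_ne_top
            (ENNReal.mul_ne_top (ENNReal.inv_ne_top.2 hK02) (measure_ne_top _ _)) h1
    obtain ⟨hfin1, hfin02⟩ := hfin
    -- pointwise comparisons
    have pw1 : ∀ x, F1 (Ici x) * F02 (Ici x) ≤ H (Ici x) + g x := by
      intro x
      simp only [hgdef]
      calc F1 (Ici x) * F02 (Ici x)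
          ≤ H (Ici x) + (F1 (Ici x) * F02 (Ici x) - H (Ici x)) := tsub_le_iff_left.1 le_rfl
        _ ≤ H (Ici x) + ((H (Ici x) - F1 (Ici x) * F02 (Ici x))
              + (F1 (Ici x) * F02 (Ici x) - H (Ici x))) :=
            add_le_add_right (self_le_add_left _ _) _
    have pw2 : ∀ x, H (Ici x) ≤ F1 (Ici x) * F02 (Ici x) + g x := by
      intro x
      simp only [hgdef]
      calc H (Ici x)
          ≤ F1 (Ici x) * F02 (Ici x) + (H (Ici x) - F1 (Ici x) * F02 (Ici x)) :=
            tsub_le_iff_left.1 le_rfl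
        _ ≤ _ := add_le_add_right (self_le_add_right _ _) _
    have ha02le : ∀ x, Q {x} * (H (Ici x))⁻¹ ≤ 1 := fun x =>
      le_trans (mul_le_mul_left
        (le_trans (measure_mono (singleton_subset_iff.2 self_mem_Ici)) (hQle _)) _)
        (mul_inv_self_le_one _)
    have main : ∀ s, s ≤ t →
        (H (Ioi s) - F1 (Ioi s) * F02 (Ioi s)) + (F1 (Ioi s) * F02 (Ioi s) - H (Ioi s))
          ≤ 4 * (∫⁻ x in Iic s, g x ∂L1) + 2 * (∫⁻ x in Iic s, g x ∂L02) := by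
      intro s hst
      set I1 := ∫⁻ x in Iic s, g x ∂L1 with hI1
      set I02 := ∫⁻ x in Iic s, g x ∂L02 with hI02
      set B1 := ∫⁻ x in Iic s, F02 (Ici x) ∂F1 with hB1
      set B2 := ∫⁻ x in Iic s, F1 (Ioi x) ∂F02 with hB2
      set E1 := ∫⁻ x in Iic s, Q {x} ∂L1 with hE1
      set E2 := ∫⁻ x in Iic s, F1 {x} ∂F02 with hE2
      have hL1s : L1 (Iic s) ≠ ⊤ :=
        ne_top_of_le_ne_top hfin1 (measure_mono (Iic_subset_Iic.2 hst))
      have hE1fin : E1 ≠ ⊤ := by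
        refine ne_top_of_le_ne_top hL1s ?_
        rw [hE1]
        calc ∫⁻ x in Iic s, Q {x} ∂L1 ≤ ∫⁻ _x in Iic s, 1 ∂L1 :=
              lintegral_mono fun x => le_trans (hQle _) prob_le_one
          _ = L1 (Iic s) := setLIntegral_one _
      have hE2fin : E2 ≠ ⊤ := by
        refine ne_top_of_le_ne_top hL1s ?_
        rw [hE2, iE2 s]
        calc ∫⁻ x in Iic s, (Q {x} * (H (Ici x))⁻¹) * (F1 (Ici x) * F02 (Ici x)) ∂L1
            ≤ ∫⁻ _x in Iic s, 1 ∂L1 := lintegral_mono fun x =>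
              mul_le_one' (ha02le x) (mul_le_one' prob_le_one prob_le_one)
          _ = L1 (Iic s) := setLIntegral_one _
      have idG : (1:ℝ≥0∞) = H (Ioi s) + (H1 (Iic s) + Q (Iic s)) := by
        have h := measure_add_measure_compl (μ := H) (measurableSet_Iic (a := s))
        rw [compl_Iic, measure_univ] at h
        have hs : H (Iic s) = H1 (Iic s) + Q (Iic s) := by
          rw [hHdef, hQdef]; simp only [Measure.add_apply]; ring
        rw [← h, hs]; ring
      have idK : (1:ℝ≥0∞) = F1 (Ioi s) * F02 (Ioi s) + (B1 + B2) := fubini_split F1 F02 s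
      have h1 : B1 ≤ (H1 (Iic s) + E1) + I1 := by
        rw [hB1, ← iB1 s]
        calc ∫⁻ x in Iic s, F1 (Ici x) * F02 (Ici x) ∂L1
            ≤ ∫⁻ x in Iic s, (H (Ici x) + g x) ∂L1 := lintegral_mono fun x => pw1 x
          _ = (∫⁻ x in Iic s, H (Ici x) ∂L1) + I1 := lintegral_add_left mCH _
          _ = (H1 (Iic s) + E1) + I1 := by rw [iA1 s]
      have h2 : B2 + E2 ≤ Q (Iic s) + I02 := by
        rw [hB2, hE2, ← iB2 s]
        calc ∫⁻ x in Iic s, F1 (Ici x) * F02 (Ici x) ∂L02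
            ≤ ∫⁻ x in Iic s, (H (Ici x) + g x) ∂L02 := lintegral_mono fun x => pw1 x
          _ = (∫⁻ x in Iic s, H (Ici x) ∂L02) + I02 := lintegral_add_left mCH _
          _ = Q (Iic s) + I02 := by rw [iA2 s]
      have h3 : E1 ≤ E2 + I1 := by
        rw [hE1, hE2, iE1 s, iE2 s]
        calc ∫⁻ x in Iic s, (Q {x} * (H (Ici x))⁻¹) * H (Ici x) ∂L1
            ≤ ∫⁻ x in Iic s, ((Q {x} * (H (Ici x))⁻¹) * (F1 (Ici x) * F02 (Ici x)) + g x) ∂L1 := by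
              refine lintegral_mono fun x => ?_
              calc (Q {x} * (H (Ici x))⁻¹) * H (Ici x)
                  ≤ (Q {x} * (H (Ici x))⁻¹) * (F1 (Ici x) * F02 (Ici x) + g x) :=
                    mul_le_mul_right (pw2 x) _
                _ = (Q {x} * (H (Ici x))⁻¹) * (F1 (Ici x) * F02 (Ici x))
                      + (Q {x} * (H (Ici x))⁻¹) * g x := mul_add _ _ _
                _ ≤ (Q {x} * (H (Ici x))⁻¹) * (F1 (Ici x) * F02 (Ici x)) + g x := by
                    refine add_le_add_right ?_ _
                    calc (Q {x} * (H (Ici x))⁻¹) * g x ≤ 1 * g x :=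
                        mul_le_mul_left (ha02le x) _
                      _ = g x := one_mul _
          _ = (∫⁻ x in Iic s, (Q {x} * (H (Ici x))⁻¹) * (F1 (Ici x) * F02 (Ici x)) ∂L1) + I1 :=
            lintegral_add_left (ma02.mul mpreK) _
      have hXfin : H1 (Iic s) + Q (Iic s) ≠ ⊤ :=
        ENNReal.add_ne_top.2 ⟨measure_ne_top _ _, measure_ne_top _ _⟩
      have hEfin : E1 + E2 ≠ ⊤ := ENNReal.add_ne_top.2 ⟨hE1fin, hE2fin⟩
      have comb1 : B1 + B2 ≤ (H1 (Iic s) + Q (Iic s)) + (2*I1 + I02) := by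
        have hsum : (B1 + B2) + (E1 + E2)
            ≤ ((H1 (Iic s) + Q (Iic s)) + (2*I1 + I02)) + (E1 + E2) := by
          calc (B1 + B2) + (E1 + E2) = B1 + (B2 + E2) + E1 := by ring
            _ ≤ (((H1 (Iic s) + E1) + I1) + (Q (Iic s) + I02)) + (E2 + I1) :=
                add_le_add (add_le_add h1 h2) h3
            _ = ((H1 (Iic s) + Q (Iic s)) + (2*I1 + I02)) + (E1 + E2) := by ring
        exact (ENNReal.add_le_add_iff_right hEfin).1 hsum
      have hGK : H (Ioi s) + (H1 (Iic s) + Q (Iic s))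
          = F1 (Ioi s) * F02 (Ioi s) + (B1 + B2) := by rw [← idG, ← idK]
      have dir1 : H (Ioi s) - F1 (Ioi s) * F02 (Ioi s) ≤ 2*I1 + I02 := by
        rw [tsub_le_iff_right]
        have hstep : H (Ioi s) + (H1 (Iic s) + Q (Iic s))
            ≤ ((2*I1 + I02) + F1 (Ioi s) * F02 (Ioi s)) + (H1 (Iic s) + Q (Iic s)) := by
          rw [hGK]
          calc F1 (Ioi s) * F02 (Ioi s) + (B1 + B2)
              ≤ F1 (Ioi s) * F02 (Ioi s) + ((H1 (Iic s) + Q (Iic s)) + (2*I1 + I02)) :=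
                add_le_add_right comb1 _
            _ = ((2*I1 + I02) + F1 (Ioi s) * F02 (Ioi s)) + (H1 (Iic s) + Q (Iic s)) := by ring
        exact (ENNReal.add_le_add_iff_right hXfin).1 hstep
      have h1' : H1 (Iic s) + E1 ≤ B1 + I1 := by
        rw [hB1, hE1, ← iA1 s, ← iB1 s]
        calc ∫⁻ x in Iic s, H (Ici x) ∂L1
            ≤ ∫⁻ x in Iic s, (F1 (Ici x) * F02 (Ici x) + g x) ∂L1 :=
              lintegral_mono fun x => pw2 x
          _ = _ := lintegral_add_left mpreK _
      have h2' : Q (Iic s) ≤ (B2 + E2) + I02 := by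
        rw [hB2, hE2, ← iA2 s, ← iB2 s]
        calc ∫⁻ x in Iic s, H (Ici x) ∂L02
            ≤ ∫⁻ x in Iic s, (F1 (Ici x) * F02 (Ici x) + g x) ∂L02 :=
              lintegral_mono fun x => pw2 x
          _ = _ := lintegral_add_left mpreK _
      have h3' : E2 ≤ E1 + I1 := by
        rw [hE1, hE2, iE1 s, iE2 s]
        calc ∫⁻ x in Iic s, (Q {x} * (H (Ici x))⁻¹) * (F1 (Ici x) * F02 (Ici x)) ∂L1
            ≤ ∫⁻ x in Iic s, ((Q {x} * (H (Ici x))⁻¹) * H (Ici x) + g x) ∂L1 := by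
              refine lintegral_mono fun x => ?_
              calc (Q {x} * (H (Ici x))⁻¹) * (F1 (Ici x) * F02 (Ici x))
                  ≤ (Q {x} * (H (Ici x))⁻¹) * (H (Ici x) + g x) :=
                    mul_le_mul_right (pw1 x) _
                _ = (Q {x} * (H (Ici x))⁻¹) * H (Ici x)
                      + (Q {x} * (H (Ici x))⁻¹) * g x := mul_add _ _ _
                _ ≤ (Q {x} * (H (Ici x))⁻¹) * H (Ici x) + g x := by
                    refine add_le_add_right ?_ _
                    calc (Q {x} * (H (Ici x))⁻¹) * g x ≤ 1 * g x :=
                        mul_le_mul_left (ha02le x) _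
                      _ = g x := one_mul _
          _ = (∫⁻ x in Iic s, (Q {x} * (H (Ici x))⁻¹) * H (Ici x) ∂L1) + I1 :=
            lintegral_add_left (ma02.mul mCH) _
      have hBfin : B1 + B2 ≠ ⊤ := by
        refine ne_top_of_le_ne_top one_ne_top ?_
        rw [idK]
        exact self_le_add_left _ _
      have comb2 : H1 (Iic s) + Q (Iic s) ≤ (B1 + B2) + (2*I1 + I02) := by
        have hsum : (H1 (Iic s) + Q (Iic s)) + (E1 + E2)
            ≤ ((B1 + B2) + (2*I1 + I02)) + (E1 + E2) := by
          calc (H1 (Iic s) + Q (Iic s)) + (E1 + E2)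
              = (H1 (Iic s) + E1) + Q (Iic s) + E2 := by ring
            _ ≤ ((B1 + I1) + ((B2 + E2) + I02)) + (E1 + I1) :=
                add_le_add (add_le_add h1' h2') h3'
            _ = ((B1 + B2) + (2*I1 + I02)) + (E1 + E2) := by ring
        exact (ENNReal.add_le_add_iff_right hEfin).1 hsum
      have dir2 : F1 (Ioi s) * F02 (Ioi s) - H (Ioi s) ≤ 2*I1 + I02 := by
        rw [tsub_le_iff_right]
        have hstep : F1 (Ioi s) * F02 (Ioi s) + (B1 + B2)
            ≤ ((2*I1 + I02) + H (Ioi s)) + (B1 + B2) := by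
          rw [← hGK]
          calc H (Ioi s) + (H1 (Iic s) + Q (Iic s))
              ≤ H (Ioi s) + ((B1 + B2) + (2*I1 + I02)) := add_le_add_right comb2 _
            _ = ((2*I1 + I02) + H (Ioi s)) + (B1 + B2) := by ring
        exact (ENNReal.add_le_add_iff_right hBfin).1 hstep
      calc (H (Ioi s) - F1 (Ioi s) * F02 (Ioi s)) + (F1 (Ioi s) * F02 (Ioi s) - H (Ioi s))
          ≤ (2*I1 + I02) + (2*I1 + I02) := add_le_add dir1 dir2
        _ = 4*I1 + 2*I02 := by ring

    -- Gronwall-type continuity argument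
    set μt : Measure ℝ≥0∞ := (4:ℝ≥0∞) • L1 + (2:ℝ≥0∞) • L02 with hμt
    have hμfin : μt (Iic t) ≠ ⊤ := by
      rw [hμt]
      simp only [Measure.add_apply, Measure.smul_apply, smul_eq_mul]
      exact ENNReal.add_ne_top.2 ⟨ENNReal.mul_ne_top (by norm_num) hfin1,
        ENNReal.mul_ne_top (by norm_num) hfin02⟩
    have hμint : ∀ s : ℝ≥0∞, 4 * (∫⁻ x in Iic s, g x ∂L1) + 2 * (∫⁻ x in Iic s, g x ∂L02)
        = ∫⁻ x in Iic s, g x ∂μt := by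
      intro s
      rw [hμt, Measure.restrict_add, lintegral_add_measure, Measure.restrict_smul,
        Measure.restrict_smul, lintegral_smul_measure, lintegral_smul_measure, smul_eq_mul, smul_eq_mul]
    set fd : ℝ≥0∞ → ℝ≥0∞ := fun s =>
      (H (Ioi s) - F1 (Ioi s) * F02 (Ioi s)) + (F1 (Ioi s) * F02 (Ioi s) - H (Ioi s)) with hfd
    have main' : ∀ s, s ≤ t → fd s ≤ ∫⁻ x in Iic s, g x ∂μt := by
      intro s hs
      rw [← hμint s]
      simpa only [hfd] using main s hs
    have hIci0 : Ici (0:ℝ≥0∞) = univ := by ext x; simp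
    have gbound : ∀ x r, (∀ u, u < x → fd u ≤ r) → g x ≤ r + r := by
      intro x r hr
      rcases eq_or_ne x 0 with rfl | hx0
      · have hg0 : g 0 = 0 := by
          simp only [hgdef]
          rw [hIci0]
          simp [measure_univ]
        rw [hg0]; exact zero_le
      · have hx : (0:ℝ≥0∞) < x := pos_iff_ne_zero.2 hx0
        have hd1 : ∀ u, u < x → H (Ioi u) ≤ F1 (Ioi u) * F02 (Ioi u) + r := by
          intro u hu
          refine tsub_le_iff_left.1 (le_trans ?_ (hr u hu))
          simp only [hfd]
          exact le_self_add
        have hd2 : ∀ u, u < x → F1 (Ioi u) * F02 (Ioi u) ≤ H (Ioi u) + r := by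
          intro u hu
          refine tsub_le_iff_left.1 (le_trans ?_ (hr u hu))
          simp only [hfd]
          exact le_add_self
        have hb1 := lim_le_lim H F1 F02 hx r hd1
        have hb2 := lim_le_lim' H F1 F02 hx r hd2
        simp only [hgdef]
        exact add_le_add (tsub_le_iff_left.2 hb1) (tsub_le_iff_left.2 hb2)
    suffices hft : fd t = 0 by
      simp only [hfd] at hft
      have h1 := add_eq_zero.1 hft
      exact le_antisymm (tsub_eq_zero_iff_le.1 h1.1) (tsub_eq_zero_iff_le.1 h1.2)
    by_contra hft0
    set S : Set ℝ≥0∞ := {s | s ≤ t ∧ 0 < fd s} with hS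
    have htmem : t ∈ S := ⟨le_rfl, pos_iff_ne_zero.2 hft0⟩
    set T := sInf S with hT
    have hTt : T ≤ t := sInf_le htmem
    have hfu : ∀ u, u < T → fd u = 0 := by
      intro u hu
      by_contra hne
      have humem : u ∈ S := ⟨(hu.trans_le hTt).le, pos_iff_ne_zero.2 hne⟩
      exact absurd (sInf_le humem) (not_le.2 hu)
    have hgT : ∀ x, x ≤ T → g x = 0 := by
      intro x hx
      have h := gbound x 0 (fun u hu => (hfu u (hu.trans_le hx)).le)
      simpa using h
    have hint0 : ∫⁻ x in Iic T, g x ∂μt = 0 := by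
      have hz2 : ∫⁻ x in Iic T, g x ∂μt = ∫⁻ _x in Iic T, (0:ℝ≥0∞) ∂μt :=
        lintegral_congr_ae ((ae_restrict_iff' measurableSet_Iic).2
          (ae_of_all _ fun x hx => hgT x hx))
      rw [hz2, lintegral_zero]
    have hfT : fd T = 0 := by
      have h := main' T hTt
      rw [hint0] at h
      exact le_antisymm h (zero_le)
    rcases eq_or_lt_of_le hTt with hTeq | hTlt
    · exact hft0 (hTeq ▸ hfT)
    · obtain ⟨v, hva, hvmem, hvt⟩ := exists_seq_strictAnti_tendsto' hTlt
      have hiInter : ⋂ n, Ioc T (v n) = ∅ := by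
        ext y
        simp only [mem_iInter, mem_Ioc, mem_empty_iff_false, iff_false]
        intro h
        have h1 : y ≤ T := ge_of_tendsto hvt (Eventually.of_forall fun n => (h n).2)
        exact absurd (h 0).1 (not_lt.2 h1)
      have htend := tendsto_measure_iInter_atTop (μ := μt) (s := fun n => Ioc T (v n))
        (fun n => measurableSet_Ioc.nullMeasurableSet)
        (fun m n hmn => Ioc_subset_Ioc_right ((hva.antitone hmn)))
        ⟨0, ne_top_of_le_ne_top hμfin
          (measure_mono (Ioc_subset_Iic_self.trans (Iic_subset_Iic.2 (hvmem 0).2.le)))⟩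
      rw [hiInter, measure_empty] at htend
      obtain ⟨n0, hn0⟩ := (htend.eventually_lt_const (by norm_num : (0:ℝ≥0∞) < 1/4)).exists
      set s0 := v n0 with hs0def
      have hs0 : s0 ∈ Ioo T t := hvmem n0
      set r := ⨆ u ∈ Ioc T s0, fd u with hrdef
      have hrle : r ≤ 2 := by
        refine iSup₂_le fun u _ => ?_
        simp only [hfd]
        calc (H (Ioi u) - F1 (Ioi u) * F02 (Ioi u)) + (F1 (Ioi u) * F02 (Ioi u) - H (Ioi u))
            ≤ H (Ioi u) + F1 (Ioi u) * F02 (Ioi u) := add_le_add tsub_le_self tsub_le_self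
          _ ≤ 1 + 1 := add_le_add prob_le_one (mul_le_one' prob_le_one prob_le_one)
          _ = 2 := one_add_one_eq_two
      have hrtop : r ≠ ⊤ := (hrle.trans_lt (by norm_num)).ne
      have hfs : ∀ u, u ∈ Ioc T s0 → fd u ≤ (r + r) * μt (Ioc T s0) := by
        intro u hu
        have hut : u ≤ t := hu.2.trans hs0.2.le
        have hgr : ∀ x, x ∈ Ioc T u → g x ≤ r + r := by
          intro x hx
          refine gbound x r fun w hw => ?_
          rcases le_or_gt w T with hwT | hwT
          · rcases eq_or_lt_of_le hwT with heq | hlt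
            · rw [heq, hfT]; exact zero_le
            · rw [hfu w hlt]; exact zero_le
          · have hwmem : w ∈ Ioc T s0 := ⟨hwT, hw.le.trans (hx.2.trans hu.2)⟩
            exact le_biSup fd hwmem
        have hsplit : ∫⁻ x in Iic u, g x ∂μt
            = (∫⁻ x in Iic T, g x ∂μt) + ∫⁻ x in Ioc T u, g x ∂μt := by
          rw [← lintegral_union measurableSet_Ioc (Iic_disjoint_Ioc le_rfl),
            Iic_union_Ioc_eq_Iic hu.1.le]
        calc fd u ≤ ∫⁻ x in Iic u, g x ∂μt := main' u hut
          _ = (∫⁻ x in Iic T, g x ∂μt) + ∫⁻ x in Ioc T u, g x ∂μt := hsplit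
          _ = ∫⁻ x in Ioc T u, g x ∂μt := by rw [hint0, zero_add]
          _ ≤ ∫⁻ _x in Ioc T u, (r + r) ∂μt :=
              setLIntegral_mono measurable_const fun x hx => hgr x hx
          _ = (r + r) * μt (Ioc T u) := setLIntegral_const _ _
          _ ≤ (r + r) * μt (Ioc T s0) :=
              mul_le_mul_right (measure_mono (Ioc_subset_Ioc_right hu.2)) _
      have hr2 : r ≤ (r + r) * μt (Ioc T s0) := by
        rw [hrdef]
        exact iSup₂_le fun u hu => hfs u hu
      have hr0 : r = 0 := by
        by_contra hr0
        have hlast : (r + r) * μt (Ioc T s0) < r := by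
          calc (r + r) * μt (Ioc T s0) ≤ (r + r) * (1/4) := mul_le_mul_right hn0.le _
            _ = r * (1/4 + 1/4) := by rw [add_mul, mul_add]
            _ = r / 2 := by
                have h14 : (4:ℝ≥0∞)⁻¹ = 2⁻¹ * 2⁻¹ := by
                  rw [← ENNReal.mul_inv (by norm_num) (by norm_num)]
                  norm_num
                have h24 : ((1:ℝ≥0∞)/4 + 1/4) = 2⁻¹ := by
                  rw [one_div, h14, ← add_mul, ENNReal.inv_two_add_inv_two, one_mul]
                rw [h24, div_eq_mul_inv]
            _ < r := ENNReal.half_lt_self hr0 hrtop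
        exact absurd hr2 (not_le.2 hlast)
      have hzero : ∀ u, u ∈ Ioc T s0 → fd u = 0 := fun u hu =>
        le_antisymm (hr0 ▸ le_biSup fd hu) (zero_le)
      have hsInflt : sInf S < s0 := by rw [← hT]; exact hs0.1
      obtain ⟨sbad, hsbadS, hsbadlt⟩ := sInf_lt_iff.1 hsInflt
      have hTs : T ≤ sbad := sInf_le hsbadS
      rcases eq_or_lt_of_le hTs with heq | hlt2
      · rw [← heq] at hsbadS
        exact absurd hfT (ne_of_gt hsbadS.2)
      · have hz3 : fd sbad = 0 := hzero sbad ⟨hlt2, hsbadlt.le⟩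
        exact absurd hz3 (ne_of_gt hsbadS.2)
end

section
/- Under Turnbull's doubly censored model, the predictable reverse hazard measure M₂⁻(dt) = H₂(dt)/H([0,t]) satisfies M₂⁻(dt) = [F_L([0,t]) F_T([0,t]) / (F_L([0,t]) F_T([0,t]) + F_R([0,t]) F_T((t,∞]))] · M_L⁻(dt), where M_L⁻(dt) = F_L(dt)/F_L([0,t]); in particular M₂⁻ ≤ M_L⁻ as measures, and consequently F₂^I([0,t]) ≥ F_L([0,t]) for all t ≥ 0. -/
open MeasureTheory Set ENNReal

lemma ae_Iic_pos (μ : Measure ℝ≥0∞) [IsFiniteMeasure μ] : ∀ᵐ u ∂μ, μ (Iic u) ≠ 0 := by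
  rw [ae_iff]
  set N : Set ℝ≥0∞ := {u | ¬ μ (Iic u) ≠ 0} with hN
  have hNdef : ∀ u, u ∈ N ↔ μ (Iic u) = 0 := by intro u; simp [hN]
  rcases eq_empty_or_nonempty N with h | h
  · simp [h]
  set a := sSup N with ha
  by_cases haN : a ∈ N
  · have h0 : μ (Iic a) = 0 := (hNdef a).mp haN
    exact measure_mono_null (fun u hu => le_sSup hu) h0
  · obtain ⟨u, hu_mono, hu_tend, hu_mem⟩ := exists_seq_tendsto_sSup h (OrderTop.bddAbove N)
    have hsup : a = ⨆ n, u n :=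
      tendsto_nhds_unique hu_tend (tendsto_atTop_iSup hu_mono)
    have hsub : N ⊆ ⋃ n, Iic (u n) := by
      intro x hx
      have hxlt : x < a := lt_of_le_of_ne (le_sSup hx) (fun he => haN (he ▸ hx))
      rw [hsup] at hxlt
      obtain ⟨n, hn⟩ := lt_iSup_iff.mp hxlt
      exact mem_iUnion.mpr ⟨n, le_of_lt hn⟩
    exact measure_mono_null hsub
      (measure_iUnion_null (fun n => (hNdef (u n)).mp (hu_mem n)))

lemma ident (μ : Measure ℝ≥0∞) [IsProbabilityMeasure μ] {A : Set ℝ≥0∞} (hA : MeasurableSet A)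
    (hpos : ∀ᵐ u ∂μ, μ (Iic u) ≠ 0) :
    ∫⁻ u in A, μ (Iic u) ∂(μ.withDensity fun s => (μ (Iic s))⁻¹) = μ A := by
  have hmeas : Measurable (fun t : ℝ≥0∞ => μ (Iic t)) :=
    Monotone.measurable (fun a b hab => measure_mono (Iic_subset_Iic.mpr hab))
  rw [MeasureTheory.restrict_withDensity hA,
    lintegral_withDensity_eq_lintegral_mul _ (show Measurable fun s => (μ (Iic s))⁻¹ from hmeas.inv) hmeas]
  have : ∀ᵐ u ∂(μ.restrict A), ((fun s => (μ (Iic s))⁻¹) * fun u => μ (Iic u)) u = 1 := by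
    filter_upwards [ae_restrict_of_ae hpos] with u hu
    simp only [Pi.mul_apply]
    exact ENNReal.inv_mul_cancel hu (measure_ne_top μ _)
  rw [lintegral_congr_ae this]
  simp

lemma core (μG μK : Measure ℝ≥0∞) {t l b : ℝ≥0∞} (htl : t ≤ l) (hlb : l ≤ b)
    (hfin : μK (Ioi t) ≠ ∞) (hmono : μG ≤ μK)
    (g k : ℝ≥0∞ → ℝ) (hgmeas : Measurable g) (hkmeas : Measurable k)
    (hg0 : ∀ s, 0 ≤ g s) (hg1 : ∀ s, g s ≤ 1)
    (hk0 : ∀ s, 0 ≤ k s) (hk1 : ∀ s, k s ≤ 1)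
    (hgid : ∀ s, s ∈ Icc l b → g b = g s + ∫ u in Ioc s b, g u ∂μG)
    (hkid : ∀ s, s ∈ Icc l b → k b = k s + ∫ u in Ioc s b, k u ∂μK)
    (hε : (μG (Ioo l b)).toReal ≤ 1/2) :
    ∀ s ∈ Icc l b, k s * g b ≤ g s * k b := by
  set ε := (μG (Ioo l b)).toReal with hεdef
  have hGK : ∀ A : Set ℝ≥0∞, μG A ≤ μK A := fun A => Measure.le_iff'.mp hmono A
  have hGfin : μG (Ioi t) ≠ ∞ := fun h => hfin (top_le_iff.mp (h ▸ hGK (Ioi t)))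
  have hsub : ∀ (s : ℝ≥0∞), l ≤ s → ∀ (A : Set ℝ≥0∞), A ⊆ Ioc s b → A ⊆ Ioi t :=
    fun s hs A hA x hx => lt_of_le_of_lt (le_trans htl hs) (mem_Ioc.mp (hA hx)).1
  -- integrability of any bounded measurable function on subsets of (t,∞]
  have hintK : ∀ (f : ℝ≥0∞ → ℝ), Measurable f → (∀ u, ‖f u‖ ≤ 2) →
      ∀ (A : Set ℝ≥0∞), A ⊆ Ioi t → IntegrableOn f A μK := by
    intro f hf hbd A hA
    exact Measure.integrableOn_of_bounded
      (fun h => hfin (top_le_iff.mp (h ▸ measure_mono hA)))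
      hf.aestronglyMeasurable (Filter.Eventually.of_forall (fun a => hbd a))
  have hintG : ∀ (f : ℝ≥0∞ → ℝ), Measurable f → (∀ u, ‖f u‖ ≤ 2) →
      ∀ (A : Set ℝ≥0∞), A ⊆ Ioi t → IntegrableOn f A μG := by
    intro f hf hbd A hA
    exact Measure.integrableOn_of_bounded
      (fun h => hGfin (top_le_iff.mp (h ▸ measure_mono hA)))
      hf.aestronglyMeasurable (Filter.Eventually.of_forall (fun a => hbd a))
  set φ : ℝ≥0∞ → ℝ := fun s => k s * g b - g s * k b with hφ
  have hφmeas : Measurable φ := (hkmeas.mul_const _).sub (hgmeas.mul_const _)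
  have hφbd : ∀ u, ‖φ u‖ ≤ 2 := by
    intro u
    have h1 : k u * g b ∈ Icc (0:ℝ) 1 :=
      ⟨mul_nonneg (hk0 u) (hg0 b), mul_le_one₀ (hk1 u) (hg0 b) (hg1 b)⟩
    have h2 : g u * k b ∈ Icc (0:ℝ) 1 :=
      ⟨mul_nonneg (hg0 u) (hk0 b), mul_le_one₀ (hg1 u) (hk0 b) (hk1 b)⟩
    rw [Real.norm_eq_abs, abs_le]
    constructor <;> simp only [hφ] <;> nlinarith [h1.1, h1.2, h2.1, h2.2]
  have hφb : φ b = 0 := by simp [hφ, mul_comm]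
  set β : ℝ≥0∞ → ℝ := fun s =>
    g b * ((∫ u in Ioc s b, k u ∂μK) - (∫ u in Ioc s b, k u ∂μG)) with hβ
  have hkbd : ∀ u, ‖k u‖ ≤ 2 := by
    intro u; rw [Real.norm_eq_abs, abs_le]; constructor <;> linarith [hk0 u, hk1 u]
  have hgbd : ∀ u, ‖g u‖ ≤ 2 := by
    intro u; rw [Real.norm_eq_abs, abs_le]; constructor <;> linarith [hg0 u, hg1 u]
  have hβ0 : ∀ s, l ≤ s → 0 ≤ β s := by
    intro s hs
    apply mul_nonneg (hg0 b)
    rw [sub_nonneg]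
    exact integral_mono_measure
      (Measure.restrict_mono (fun x hx => hx) hmono)
      (Filter.Eventually.of_forall (fun u => hk0 u))
      (hintK k hkmeas hkbd _ (hsub s hs _ (fun x hx => hx)))
  -- monotonicity of β
  have hβmono : ∀ s u, l ≤ s → s ≤ u → u ≤ b → β u ≤ β s := by
    intro s u hls hsu hub
    have hsplit : Ioc s b = Ioc s u ∪ Ioc u b := (Ioc_union_Ioc_eq_Ioc hsu hub).symm
    have hdisj : Disjoint (Ioc s u) (Ioc u b) := by
      rw [Set.disjoint_left]; intro x hx1 hx2; exact absurd hx1.2 (not_le.mpr hx2.1)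
    have hKsplit : (∫ x in Ioc s b, k x ∂μK)
        = (∫ x in Ioc s u, k x ∂μK) + (∫ x in Ioc u b, k x ∂μK) := by
      rw [hsplit]
      exact setIntegral_union hdisj measurableSet_Ioc
        (hintK k hkmeas hkbd _ (hsub s hls _ (fun x hx => ⟨hx.1, le_trans hx.2 hub⟩)))
        (hintK k hkmeas hkbd _ (hsub u (le_trans hls hsu) _ (fun x hx => hx)))
    have hGsplit : (∫ x in Ioc s b, k x ∂μG)
        = (∫ x in Ioc s u, k x ∂μG) + (∫ x in Ioc u b, k x ∂μG) := by
      rw [hsplit]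
      exact setIntegral_union hdisj measurableSet_Ioc
        (hintG k hkmeas hkbd _ (hsub s hls _ (fun x hx => ⟨hx.1, le_trans hx.2 hub⟩)))
        (hintG k hkmeas hkbd _ (hsub u (le_trans hls hsu) _ (fun x hx => hx)))
    have hd : (∫ x in Ioc s u, k x ∂μG) ≤ (∫ x in Ioc s u, k x ∂μK) :=
      integral_mono_measure (Measure.restrict_mono (fun x hx => hx) hmono)
        (Filter.Eventually.of_forall (fun u => hk0 u))
        (hintK k hkmeas hkbd _ (hsub s hls _ (fun x hx => ⟨hx.1, le_trans hx.2 hub⟩)))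
    simp only [hβ, hKsplit, hGsplit]
    apply mul_le_mul_of_nonneg_left _ (hg0 b)
    linarith
  -- the key identity
  have hφeq : ∀ s, l ≤ s → s ≤ b → φ s = (∫ u in Ioo s b, -φ u ∂μG) - β s := by
    intro s hsl hsb
    rcases eq_or_lt_of_le hsb with rfl | hslt
    · simp [hφ, hβ, mul_comm]
    have hmem : s ∈ Icc l b := ⟨hsl, hsb⟩
    have hIG := hgid s hmem
    have hJK := hkid s hmem
    have hIocsub : Ioc s b ⊆ Ioi t := hsub s hsl _ (fun x hx => hx)
    have hintg : IntegrableOn g (Ioc s b) μG := hintG g hgmeas hgbd _ hIocsub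
    have hintkG : IntegrableOn k (Ioc s b) μG := hintG k hkmeas hkbd _ hIocsub
    have h2 : ∫ u in Ioc s b, (k b * g u - g b * k u) ∂μG
        = k b * (∫ u in Ioc s b, g u ∂μG) - g b * (∫ u in Ioc s b, k u ∂μG) := by
      rw [integral_sub (hintg.const_mul _) (hintkG.const_mul _),
        integral_const_mul, integral_const_mul]
    have h3 : ∀ u, k b * g u - g b * k u = -φ u := by
      intro u; simp only [hφ]; ring
    have h4 : ∫ u in Ioc s b, -φ u ∂μG
        = k b * (∫ u in Ioc s b, g u ∂μG) - g b * (∫ u in Ioc s b, k u ∂μG) := by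
      rw [← h2]; exact integral_congr_ae (Filter.Eventually.of_forall (fun u => (h3 u).symm))
    have h5 : ∫ u in Ioc s b, -φ u ∂μG = ∫ u in Ioo s b, -φ u ∂μG := by
      rw [← Ioo_union_right hslt,
        setIntegral_union (by rw [Set.disjoint_left]; rintro x hx rfl; exact lt_irrefl _ hx.2) (measurableSet_singleton b)
          (hintG _ (show Measurable (fun u => -φ u) from hφmeas.neg) (fun u => (norm_neg (φ u)).trans_le (hφbd u)) _
            (fun x hx => hsub s hsl _ Ioo_subset_Ioc_self hx))
          (hintG _ (show Measurable (fun u => -φ u) from hφmeas.neg) (fun u => (norm_neg (φ u)).trans_le (hφbd u)) _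
            (fun x hx => lt_of_le_of_lt (le_trans htl hsl) (by rw [mem_singleton_iff] at hx; exact hx ▸ hslt))),
        integral_singleton, hφb]
      simp
    have h6 : β s = g b * (∫ u in Ioc s b, k u ∂μK) - g b * (∫ u in Ioc s b, k u ∂μG) := by
      simp only [hβ]; ring
    simp only [hφ] at *
    rw [← h5, h4, h6]
    linear_combination k b * hIG - g b * hJK
  -- sup of φ
  have hMne : (φ '' Icc l b).Nonempty := ⟨φ l, ⟨l, ⟨le_refl l, hlb⟩, rfl⟩⟩
  have hMbdd : BddAbove (φ '' Icc l b) := by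
    refine ⟨2, ?_⟩
    rintro y ⟨x, _, rfl⟩
    exact le_trans (le_abs_self _) (hφbd x)
  set M := sSup (φ '' Icc l b) with hM
  have hMle : ∀ s, s ∈ Icc l b → φ s ≤ M := fun s hs => le_csSup hMbdd ⟨s, hs, rfl⟩
  set Mp := max M 0 with hMp
  have hMp0 : 0 ≤ Mp := le_max_right _ _
  have hε0 : (0:ℝ) ≤ ε := ENNReal.toReal_nonneg
  have hεs : ∀ s, l ≤ s → (μG (Ioo s b)).toReal ≤ ε := by
    intro s hs
    apply ENNReal.toReal_mono
    · exact fun h => hGfin (top_le_iff.mp (h ▸ measure_mono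
        (fun x hx => lt_of_le_of_lt htl hx.1)))
    · exact measure_mono (fun x hx => ⟨lt_of_le_of_lt hs hx.1, hx.2⟩)
  have hIoosub : ∀ s, l ≤ s → Ioo s b ⊆ Ioi t :=
    fun s hs x hx => lt_of_le_of_lt (le_trans htl hs) hx.1
  have hμGfin : ∀ s, l ≤ s → μG (Ioo s b) < ⊤ := by
    intro s hs
    exact lt_of_le_of_lt (measure_mono (hIoosub s hs)) (lt_top_iff_ne_top.mpr hGfin)
  -- step 1
  have step1 : ∀ s, s ∈ Icc l b → -φ s ≤ Mp * ε + β s := by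
    intro s hs
    rw [hφeq s hs.1 hs.2, integral_neg, neg_sub, sub_neg_eq_add]
    have hb1 : (∫ u in Ioo s b, φ u ∂μG) ≤ Mp * (μG (Ioo s b)).toReal := by
      calc (∫ u in Ioo s b, φ u ∂μG) ≤ ∫ _u in Ioo s b, Mp ∂μG := by
            apply setIntegral_mono_on
              (hintG φ hφmeas hφbd _ (hIoosub s hs.1)) _ measurableSet_Ioo
            · intro x hx
              exact le_trans (hMle x ⟨le_trans hs.1 (le_of_lt hx.1), le_of_lt hx.2⟩)
                (le_max_left _ _)
            · exact integrableOn_const (hμGfin s hs.1).ne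
        _ = (μG (Ioo s b)).toReal • Mp := setIntegral_const Mp
        _ ≤ Mp * (μG (Ioo s b)).toReal := by rw [smul_eq_mul, mul_comm]
    have h7 : Mp * (μG (Ioo s b)).toReal ≤ Mp * ε :=
      mul_le_mul_of_nonneg_left (hεs s hs.1) hMp0
    linarith
  -- step 2
  have step2 : ∀ s, s ∈ Icc l b → φ s ≤ Mp * ε * ε := by
    intro s hs
    rw [hφeq s hs.1 hs.2]
    have hb2 : (∫ u in Ioo s b, -φ u ∂μG) ≤ (Mp * ε + β s) * (μG (Ioo s b)).toReal := by
      calc (∫ u in Ioo s b, -φ u ∂μG) ≤ ∫ _u in Ioo s b, (Mp * ε + β s) ∂μG := by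
            apply setIntegral_mono_on
              (hintG _ hφmeas.neg (fun u => (norm_neg (φ u)).trans_le (hφbd u)) _
                (hIoosub s hs.1)) _ measurableSet_Ioo
            · intro x hx
              have hx1 : x ∈ Icc l b := ⟨le_trans hs.1 (le_of_lt hx.1), le_of_lt hx.2⟩
              calc -φ x ≤ Mp * ε + β x := step1 x hx1
                _ ≤ Mp * ε + β s := by
                    have := hβmono s x hs.1 (le_of_lt hx.1) (le_of_lt hx.2)
                    linarith
            · exact integrableOn_const (hμGfin s hs.1).ne
        _ = (μG (Ioo s b)).toReal • (Mp * ε + β s) := setIntegral_const _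
        _ ≤ (Mp * ε + β s) * (μG (Ioo s b)).toReal := by rw [smul_eq_mul, mul_comm]
    have h1 := hεs s hs.1
    have h2 := hβ0 s hs.1
    have h3 : (Mp * ε + β s) * (μG (Ioo s b)).toReal ≤ (Mp * ε + β s) * ε := by
      apply mul_le_mul_of_nonneg_left h1
      have := mul_nonneg hMp0 hε0
      linarith
    nlinarith [hb2, h3, h2, hε, hε0]
  -- conclude M ≤ 0
  have hMfin : M ≤ Mp * ε * ε := by
    apply csSup_le hMne
    rintro y ⟨x, hx, rfl⟩
    exact step2 x hx
  have hM0 : M ≤ 0 := by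
    by_contra h
    push_neg at h
    rw [hMp, max_eq_left h.le] at hMfin
    have e1 : M * ε ≤ M * (1/2) := mul_le_mul_of_nonneg_left hε h.le
    have e2 : M * ε * ε ≤ (M * (1/2)) * (1/2) :=
      mul_le_mul e1 hε hε0 (by linarith)
    linarith
  intro s hs
  have := le_trans (hMle s hs) hM0
  simp only [hφ] at this
  linarith

lemma cdf_le (F2 FL : Measure ℝ≥0∞) [IsProbabilityMeasure F2] [IsProbabilityMeasure FL]
    (hmono : F2.withDensity (fun s => (F2 (Iic s))⁻¹) ≤ FL.withDensity (fun s => (FL (Iic s))⁻¹)) :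
    ∀ t, FL (Iic t) ≤ F2 (Iic t) := by
  intro t
  by_cases hK0 : FL (Iic t) = 0
  · rw [hK0]; exact bot_le
  set νG := F2.withDensity (fun s => (F2 (Iic s))⁻¹) with hνG
  set νK := FL.withDensity (fun s => (FL (Iic s))⁻¹) with hνK
  have hmeasG : Measurable (fun s : ℝ≥0∞ => F2 (Iic s)) :=
    Monotone.measurable (fun a b hab => measure_mono (Iic_subset_Iic.mpr hab))
  have hmeasK : Measurable (fun s : ℝ≥0∞ => FL (Iic s)) :=
    Monotone.measurable (fun a b hab => measure_mono (Iic_subset_Iic.mpr hab))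
  set g : ℝ≥0∞ → ℝ := fun s => (F2 (Iic s)).toReal with hg
  set k : ℝ≥0∞ → ℝ := fun s => (FL (Iic s)).toReal with hk
  have hgmeas : Measurable g := hmeasG.ennreal_toReal
  have hkmeas : Measurable k := hmeasK.ennreal_toReal
  have hg0 : ∀ s, 0 ≤ g s := fun s => ENNReal.toReal_nonneg
  have hk0 : ∀ s, 0 ≤ k s := fun s => ENNReal.toReal_nonneg
  have hg1 : ∀ s, g s ≤ 1 := fun s => by
    simpa using ENNReal.toReal_mono one_ne_top prob_le_one
  have hk1 : ∀ s, k s ≤ 1 := fun s => by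
    simpa using ENNReal.toReal_mono one_ne_top prob_le_one
  -- identities
  have hBochG : ∀ A : Set ℝ≥0∞, MeasurableSet A → ∫ u in A, g u ∂νG = (F2 A).toReal := by
    intro A hA
    rw [← ident F2 hA (ae_Iic_pos F2)]
    exact integral_toReal (hmeasG.aemeasurable.restrict)
      (Filter.Eventually.of_forall (fun u => measure_lt_top _ _))
  have hBochK : ∀ A : Set ℝ≥0∞, MeasurableSet A → ∫ u in A, k u ∂νK = (FL A).toReal := by
    intro A hA
    rw [← ident FL hA (ae_Iic_pos FL)]
    exact integral_toReal (hmeasK.aemeasurable.restrict)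
      (Filter.Eventually.of_forall (fun u => measure_lt_top _ _))
  have hgid : ∀ s bb : ℝ≥0∞, s ≤ bb → g bb = g s + ∫ u in Ioc s bb, g u ∂νG := by
    intro s bb hsb
    rw [hBochG _ measurableSet_Ioc]
    have hsplit : F2 (Iic bb) = F2 (Iic s) + F2 (Ioc s bb) := by
      rw [← Iic_union_Ioc_eq_Iic hsb,
        measure_union (Iic_disjoint_Ioc le_rfl) measurableSet_Ioc]
    simp only [hg]
    rw [hsplit, ENNReal.toReal_add (measure_ne_top _ _) (measure_ne_top _ _)]
  have hkid : ∀ s bb : ℝ≥0∞, s ≤ bb → k bb = k s + ∫ u in Ioc s bb, k u ∂νK := by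
    intro s bb hsb
    rw [hBochK _ measurableSet_Ioc]
    have hsplit : FL (Iic bb) = FL (Iic s) + FL (Ioc s bb) := by
      rw [← Iic_union_Ioc_eq_Iic hsb,
        measure_union (Iic_disjoint_Ioc le_rfl) measurableSet_Ioc]
    simp only [hk]
    rw [hsplit, ENNReal.toReal_add (measure_ne_top _ _) (measure_ne_top _ _)]
  -- finiteness of νK on (t,∞]
  have hfinK : νK (Ioi t) ≠ ∞ := by
    rw [hνK, withDensity_apply _ measurableSet_Ioi]
    have hb : ∫⁻ s in Ioi t, (FL (Iic s))⁻¹ ∂FL ≤ ∫⁻ _s in Ioi t, (FL (Iic t))⁻¹ ∂FL := by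
      apply setLIntegral_mono measurable_const
      intro x hx
      exact ENNReal.inv_le_inv.mpr (measure_mono (Iic_subset_Iic.mpr (le_of_lt hx)))
    apply ne_top_of_le_ne_top _ hb
    rw [setLIntegral_const]
    exact ENNReal.mul_ne_top (ENNReal.inv_ne_top.mpr hK0) (measure_ne_top _ _)
  have hGK : ∀ A : Set ℝ≥0∞, νG A ≤ νK A := fun A => Measure.le_iff'.mp hmono A
  have hfinG : νG (Ioi t) ≠ ∞ := fun h => hfinK (top_le_iff.mp (h ▸ hGK (Ioi t)))
  -- positivity of k above t
  have hkt : 0 < k t := ENNReal.toReal_pos hK0 (measure_ne_top _ _)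
  have hkmono : ∀ u v : ℝ≥0∞, u ≤ v → k u ≤ k v := fun u v huv =>
    ENNReal.toReal_mono (measure_ne_top _ _) (measure_mono (Iic_subset_Iic.mpr huv))
  have hgmono : ∀ u v : ℝ≥0∞, u ≤ v → g u ≤ g v := fun u v huv =>
    ENNReal.toReal_mono (measure_ne_top _ _) (measure_mono (Iic_subset_Iic.mpr huv))
  -- dividing lemma
  have hdiv : ∀ x y c d : ℝ, x * c ≤ y * d → d ≤ c → 0 < d → 0 ≤ y → x ≤ y := by
    intro x y c d h1 h2 h3 h4
    nlinarith
  -- the set S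
  set S : Set ℝ≥0∞ := {s | t ≤ s ∧ ∀ u, s ≤ u → k u ≤ g u} with hS
  have hktop : k ∞ = 1 := by simp [hk, Iic_top, measure_univ]
  have hgtop : g ∞ = 1 := by simp [hg, Iic_top, measure_univ]
  have hStop : (∞ : ℝ≥0∞) ∈ S := by
    refine ⟨le_top, fun u hu => ?_⟩
    rw [top_le_iff.mp hu, hktop, hgtop]
  set c := sInf S with hc
  have hctS : t ≤ c := le_sInf (fun s hs => hs.1)
  have habove : ∀ u, c < u → k u ≤ g u := by
    intro u hu
    obtain ⟨s, hsS, hsu⟩ := sInf_lt_iff.mp hu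
    exact hsS.2 u (le_of_lt hsu)
  -- small interval above a point
  have hsmall_above : ∀ a : ℝ≥0∞, t ≤ a → a ≠ ∞ → ∃ b, a < b ∧ (νG (Ioo a b)).toReal ≤ 1/2 := by
    intro a hta ha
    obtain ⟨u, hanti, hmem, htend⟩ := exists_seq_strictAnti_tendsto' (lt_top_iff_ne_top.mpr ha)
    have hsubt : ∀ n, Ioo a (u n) ⊆ Ioi t := fun n x hx => lt_of_le_of_lt hta hx.1
    have hfin0 : νG (Ioo a (u 0)) ≠ ∞ :=
      fun h => hfinG (top_le_iff.mp (h ▸ measure_mono (hsubt 0)))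
    have hnull : (⋂ n, Ioo a (u n)) = ∅ := by
      rw [eq_empty_iff_forall_notMem]
      intro x hx
      have hxlt : ∀ n, x < u n := fun n => (mem_iInter.mp hx n).2
      have hxa : a < x := (mem_iInter.mp hx 0).1
      have hinf : Filter.Tendsto u Filter.atTop (nhds (⨅ n, u n)) :=
        tendsto_atTop_iInf hanti.antitone
      have heq : (⨅ n, u n) = a := tendsto_nhds_unique hinf htend
      exact absurd (heq ▸ le_iInf (fun n => (hxlt n).le)) (not_le.mpr hxa)
    have htendm : Filter.Tendsto (fun n => νG (Ioo a (u n))) Filter.atTop (nhds 0) := by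
      have h1 := tendsto_measure_iInter_atTop (μ := νG)
        (fun n => measurableSet_Ioo.nullMeasurableSet)
        (fun m n hmn => Ioo_subset_Ioo_right (hanti.antitone hmn)) ⟨0, hfin0⟩
      rw [hnull, measure_empty] at h1
      exact h1
    have hev : ∀ᶠ n in Filter.atTop, νG (Ioo a (u n)) < ENNReal.ofReal (1/2) :=
      htendm.eventually_lt_const (by simp [ENNReal.ofReal_pos])
    obtain ⟨n, hn⟩ := hev.exists
    refine ⟨u n, (hmem n).1, ?_⟩
    calc (νG (Ioo a (u n))).toReal ≤ (ENNReal.ofReal (1/2)).toReal :=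
          ENNReal.toReal_mono ENNReal.ofReal_ne_top hn.le
      _ = 1/2 := by rw [ENNReal.toReal_ofReal]; norm_num
  -- small interval below a point
  have hsmall_below : ∀ a : ℝ≥0∞, t < a →
      ∃ l', t ≤ l' ∧ l' < a ∧ (νG (Ioo l' a)).toReal ≤ 1/2 := by
    intro a hta
    obtain ⟨u, hmono', hmem, htend⟩ := exists_seq_strictMono_tendsto' hta
    have hsubt : ∀ n, Ioo (u n) a ⊆ Ioi t := fun n x hx => lt_trans (hmem n).1 hx.1
    have hfin0 : νG (Ioo (u 0) a) ≠ ∞ :=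
      fun h => hfinG (top_le_iff.mp (h ▸ measure_mono (hsubt 0)))
    have hnull : (⋂ n, Ioo (u n) a) = ∅ := by
      rw [eq_empty_iff_forall_notMem]
      intro x hx
      have hxgt : ∀ n, u n < x := fun n => (mem_iInter.mp hx n).1
      have hxa : x < a := (mem_iInter.mp hx 0).2
      have hsup : Filter.Tendsto u Filter.atTop (nhds (⨆ n, u n)) :=
        tendsto_atTop_iSup hmono'.monotone
      have heq : (⨆ n, u n) = a := tendsto_nhds_unique hsup htend
      exact absurd (heq ▸ iSup_le (fun n => (hxgt n).le)) (not_le.mpr hxa)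
    have htendm : Filter.Tendsto (fun n => νG (Ioo (u n) a)) Filter.atTop (nhds 0) := by
      have h1 := tendsto_measure_iInter_atTop (μ := νG)
        (fun n => measurableSet_Ioo.nullMeasurableSet)
        (fun m n hmn => Ioo_subset_Ioo_left (hmono'.monotone hmn)) ⟨0, hfin0⟩
      rw [hnull, measure_empty] at h1
      exact h1
    have hev : ∀ᶠ n in Filter.atTop, νG (Ioo (u n) a) < ENNReal.ofReal (1/2) :=
      htendm.eventually_lt_const (by simp [ENNReal.ofReal_pos])
    obtain ⟨n, hn⟩ := hev.exists
    refine ⟨u n, (hmem n).1.le, (hmem n).2, ?_⟩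
    calc (νG (Ioo (u n) a)).toReal ≤ (ENNReal.ofReal (1/2)).toReal :=
          ENNReal.toReal_mono ENNReal.ofReal_ne_top hn.le
      _ = 1/2 := by rw [ENNReal.toReal_ofReal]; norm_num
  -- apply core + divide
  have hcore_use : ∀ l b : ℝ≥0∞, t ≤ l → l ≤ b → k b ≤ g b → (νG (Ioo l b)).toReal ≤ 1/2 →
      ∀ s ∈ Icc l b, k s ≤ g s := by
    intro l b htl hlb hkgb hhalf s hs
    have hres := core νG νK htl hlb hfinK hmono g k hgmeas hkmeas hg0 hg1 hk0 hk1
        (fun s hs => hgid s b hs.2) (fun s hs => hkid s b hs.2) hhalf s hs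
    have hkb : 0 < k b := lt_of_lt_of_le hkt (hkmono t b (le_trans htl hlb))
    exact hdiv (k s) (g s) (g b) (k b) hres hkgb hkb (hg0 s)
  have hcS : c ∈ S := by
    rcases eq_or_ne c ∞ with hceq | hcne
    · rw [hceq]; exact hStop
    · obtain ⟨b, hcb, hb⟩ := hsmall_above c hctS hcne
      have hall : ∀ s ∈ Icc c b, k s ≤ g s :=
        hcore_use c b hctS hcb.le (habove b hcb) hb
      refine ⟨hctS, fun u hu => ?_⟩
      rcases eq_or_lt_of_le hu with heq | hlt
      · exact heq ▸ hall c ⟨le_rfl, hcb.le⟩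
      · exact habove u hlt
  have hceqt : c = t := by
    by_contra hne
    have hlt : t < c := lt_of_le_of_ne hctS (Ne.symm hne)
    obtain ⟨l', htl', hl'c, hl'⟩ := hsmall_below c hlt
    have hall : ∀ s ∈ Icc l' c, k s ≤ g s :=
      hcore_use l' c htl' hl'c.le (hcS.2 c le_rfl) hl'
    have hl'S : l' ∈ S := by
      refine ⟨htl', fun u hu => ?_⟩
      rcases le_or_gt u c with h1 | h1
      · exact hall u ⟨hu, h1⟩
      · exact habove u h1
    exact absurd (sInf_le hl'S) (not_le.mpr hl'c)
  have hfinal : k t ≤ g t := hcS.2 t hceqt.le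
  exact (ENNReal.toReal_le_toReal (measure_ne_top _ _) (measure_ne_top _ _)).mp hfinal

/-- under Turnbull's doubly censored model, the predictable reverse hazard
measure `M₂⁻(dt) = H₂(dt)/H([0,t])` satisfies
`M₂⁻(dt) = [F_L([0,t]) F_T([0,t]) / (F_L([0,t]) F_T([0,t]) + F_R([0,t]) F_T((t,∞]))] M_L⁻(dt)`
with `M_L⁻(dt) = F_L(dt)/F_L([0,t])`; in particular `M₂⁻ ≤ M_L⁻` as measures and hence
`F₂^I([0,t]) ≥ F_L([0,t])` for all `t`, where `F₂^I` is the distribution associated with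
`M₂⁻` (i.e. the predictable reverse hazard of `F₂^I` is `M₂⁻`). -/
theorem turnbull_M2_bound (FT FL FR : Measure ℝ≥0∞)
    [IsProbabilityMeasure FT] [IsProbabilityMeasure FL] [IsProbabilityMeasure FR]
    (H0 H1 H2 : Measure ℝ≥0∞)
    (hH0 : ∀ B, MeasurableSet B → H0 B = ∫⁻ t in B, (FL (Iic t) - FR (Iic t)) ∂FT)
    (hH1 : ∀ B, MeasurableSet B → H1 B = ∫⁻ t in B, FT (Ioi t) ∂FR)
    (hH2 : ∀ B, MeasurableSet B → H2 B = ∫⁻ t in B, FT (Iic t) ∂FL)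
    (hH : ∀ t, (H0 + H1 + H2) (Iic t)
      = FL (Iic t) * FT (Iic t) + FR (Iic t) * FT (Ioi t))
    (F2 : Measure ℝ≥0∞) [IsProbabilityMeasure F2]
    (hF2 : ∀ B, MeasurableSet B →
      ∫⁻ s in B, (F2 (Iic s))⁻¹ ∂F2 = ∫⁻ s in B, ((H0 + H1 + H2) (Iic s))⁻¹ ∂H2) :
    (∀ B, MeasurableSet B →
        ∫⁻ t in B, ((H0 + H1 + H2) (Iic t))⁻¹ ∂H2
          = ∫⁻ t in B, (FL (Iic t) * FT (Iic t)
              / (FL (Iic t) * FT (Iic t) + FR (Iic t) * FT (Ioi t)))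
              * (FL (Iic t))⁻¹ ∂FL)
      ∧ (∀ B, MeasurableSet B →
          ∫⁻ t in B, ((H0 + H1 + H2) (Iic t))⁻¹ ∂H2 ≤ ∫⁻ t in B, (FL (Iic t))⁻¹ ∂FL)
      ∧ (∀ t, FL (Iic t) ≤ F2 (Iic t)) := by
  have hmeasL : Measurable (fun t : ℝ≥0∞ => FL (Iic t)) :=
    Monotone.measurable (fun a b hab => measure_mono (Iic_subset_Iic.mpr hab))
  have hmeasT : Measurable (fun t : ℝ≥0∞ => FT (Iic t)) :=
    Monotone.measurable (fun a b hab => measure_mono (Iic_subset_Iic.mpr hab))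
  have hmeasR : Measurable (fun t : ℝ≥0∞ => FR (Iic t)) :=
    Monotone.measurable (fun a b hab => measure_mono (Iic_subset_Iic.mpr hab))
  have hmeasTo : Measurable (fun t : ℝ≥0∞ => FT (Ioi t)) :=
    Antitone.measurable (fun a b hab => measure_mono (fun x hx => lt_of_le_of_lt hab hx))
  set D : ℝ≥0∞ → ℝ≥0∞ := fun t => FL (Iic t) * FT (Iic t) + FR (Iic t) * FT (Ioi t) with hD
  have hmeasD : Measurable D := (hmeasL.mul hmeasT).add (hmeasR.mul hmeasTo)
  have hH2eq : H2 = FL.withDensity (fun t => FT (Iic t)) := by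
    ext B hB
    rw [hH2 B hB, withDensity_apply _ hB]
  have key : ∀ B, MeasurableSet B →
      ∫⁻ t in B, ((H0 + H1 + H2) (Iic t))⁻¹ ∂H2 = ∫⁻ t in B, FT (Iic t) * (D t)⁻¹ ∂FL := by
    intro B hB
    have h1 : ∫⁻ t in B, ((H0 + H1 + H2) (Iic t))⁻¹ ∂H2 = ∫⁻ t in B, (D t)⁻¹ ∂H2 := by
      apply lintegral_congr; intro t; rw [hH t]
    rw [h1]
    conv_lhs => rw [hH2eq]
    rw [MeasureTheory.restrict_withDensity hB,
      lintegral_withDensity_eq_lintegral_mul _ hmeasT (show Measurable fun t => (D t)⁻¹ from hmeasD.inv)]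
    rfl
  have part1 : ∀ B, MeasurableSet B →
      ∫⁻ t in B, ((H0 + H1 + H2) (Iic t))⁻¹ ∂H2
        = ∫⁻ t in B, (FL (Iic t) * FT (Iic t)
            / (FL (Iic t) * FT (Iic t) + FR (Iic t) * FT (Ioi t)))
            * (FL (Iic t))⁻¹ ∂FL := by
    intro B hB
    rw [key B hB]
    apply lintegral_congr_ae
    filter_upwards [ae_restrict_of_ae (ae_Iic_pos FL)] with t ht
    have hLne : FL (Iic t) ≠ ∞ := measure_ne_top _ _
    have hcanc : FL (Iic t) * FT (Iic t) * (FL (Iic t))⁻¹ = FT (Iic t) := by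
      rw [mul_comm (FL (Iic t)) (FT (Iic t)), mul_assoc, ENNReal.mul_inv_cancel ht hLne, mul_one]
    rw [div_eq_mul_inv,
      show FL (Iic t) * FT (Iic t) * (D t)⁻¹ * (FL (Iic t))⁻¹
        = FL (Iic t) * FT (Iic t) * (FL (Iic t))⁻¹ * (D t)⁻¹ from by ring, hcanc]
  have part2 : ∀ B, MeasurableSet B →
      ∫⁻ t in B, ((H0 + H1 + H2) (Iic t))⁻¹ ∂H2 ≤ ∫⁻ t in B, (FL (Iic t))⁻¹ ∂FL := by
    intro B hB
    rw [key B hB]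
    apply lintegral_mono
    intro t
    have h1 : (D t)⁻¹ ≤ (FL (Iic t) * FT (Iic t))⁻¹ :=
      ENNReal.inv_le_inv.mpr le_self_add
    calc FT (Iic t) * (D t)⁻¹ ≤ FT (Iic t) * (FL (Iic t) * FT (Iic t))⁻¹ := by
          exact mul_le_mul_of_nonneg_left h1 (by positivity)
      _ = FT (Iic t) * ((FL (Iic t))⁻¹ * (FT (Iic t))⁻¹) := by
          rw [ENNReal.mul_inv (Or.inr (measure_ne_top _ _)) (Or.inl (measure_ne_top _ _))]
      _ = (FL (Iic t))⁻¹ * (FT (Iic t) * (FT (Iic t))⁻¹) := by ring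
      _ ≤ (FL (Iic t))⁻¹ * 1 := by
          refine mul_le_mul_of_nonneg_left ?_ (by positivity)
          rcases eq_or_ne (FT (Iic t)) 0 with h | h
          · simp [h]
          · rw [ENNReal.mul_inv_cancel h (measure_ne_top _ _)]
      _ = (FL (Iic t))⁻¹ := mul_one _
  refine ⟨part1, part2, ?_⟩
  apply cdf_le
  rw [Measure.le_iff]
  intro B hB
  rw [withDensity_apply _ hB, withDensity_apply _ hB]
  calc ∫⁻ s in B, (F2 (Iic s))⁻¹ ∂F2
      = ∫⁻ s in B, ((H0 + H1 + H2) (Iic s))⁻¹ ∂H2 := hF2 B hB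
    _ ≤ ∫⁻ s in B, (FL (Iic s))⁻¹ ∂FL := part2 B hB
end

section
/- Let U = min_{1≤i≤n} Y_i be the minimum of n i.i.d. observations with distribution H, and suppose the measure μ(ds) = F₂^I(ds)/F₀₁^I([0,s]) satisfies μ((t₀₀, t]) → 0 as t ↓ t₀₀ and is finite on (t₀₀,∞]. Then √n · F₂^I((t₀₀, U)) → 0 in probability as n → ∞. -/
open MeasureTheory Set ENNReal ProbabilityTheory Filter

/-- Auxiliary: `√n → ∞`. -/
lemma aux_sqrt_nat_tendsto_atTop : Tendsto (fun n : ℕ => Real.sqrt n) atTop atTop := by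
  apply tendsto_atTop_atTop.2
  intro b
  refine ⟨⌈b⌉₊ ^ 2, fun n hn => ?_⟩
  have h1 : (b : ℝ) ≤ Real.sqrt ((⌈b⌉₊ : ℝ) ^ 2) := by
    rw [Real.sqrt_sq (Nat.cast_nonneg _)]
    exact Nat.le_ceil b
  refine h1.trans (Real.sqrt_le_sqrt ?_)
  exact_mod_cast hn

/-- let `U = min_{1≤i≤n} Y_i` be the minimum of `n` i.i.d. observations with
distribution `H`, where `H([0,t]) = F₂^I([0,t]) F₀₁^I([0,t])`, `F₂^I([0,t₀₀]) > 0`, and the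
measure `μ(ds) = F₂^I(ds)/F₀₁^I([0,s])` is finite on `(t₀₀,∞]` with `μ((t₀₀,t]) → 0` as
`t ↓ t₀₀`. Then `√n · F₂^I((t₀₀, U)) → 0` in probability as `n → ∞`. -/
theorem sqrt_n_F2_min_to_zero {Ω : Type*} [MeasurableSpace Ω]
    (P : Measure Ω) [IsProbabilityMeasure P]
    (H F2 F01 : Measure ℝ≥0∞)
    [IsProbabilityMeasure H] [IsProbabilityMeasure F2] [IsProbabilityMeasure F01]
    (hfac : ∀ t, H (Iic t) = F2 (Iic t) * F01 (Iic t))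
    (t00 : ℝ≥0∞) (hF2pos : 0 < F2 (Iic t00))
    (μ : Measure ℝ≥0∞)
    (hμ : ∀ B, MeasurableSet B → μ B = ∫⁻ s in B, (F01 (Iic s))⁻¹ ∂F2)
    (hμfin : μ (Ioi t00) < ∞)
    (hμlim : Tendsto (fun t => μ (Ioc t00 t)) (nhdsWithin t00 (Ioi t00)) (nhds 0))
    (Y : ℕ → Ω → ℝ≥0∞) (hY : ∀ i, Measurable (Y i))
    (hiid : ∀ i, P.map (Y i) = H)
    (hindep : iIndepFun Y P) :
    ∀ ε : ℝ≥0∞, 0 < ε →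
      Tendsto (fun n : ℕ =>
          P {ω | ε < ENNReal.ofReal (Real.sqrt n)
              * F2 (Ioo t00 (⨅ i ∈ Finset.range n, Y i ω))})
        atTop (nhds 0) := by
  -- It suffices to treat `ε' = min ε 1`, since the event for `ε` is smaller.
  have key : ∀ ε : ℝ≥0∞, 0 < ε → ε ≤ 1 →
      Tendsto (fun n : ℕ =>
          P {ω | ε < ENNReal.ofReal (Real.sqrt n)
              * F2 (Ioo t00 (⨅ i ∈ Finset.range n, Y i ω))})
        atTop (nhds 0) := by
    intro ε hε hε1
    have hεtop : ε ≠ ∞ := (hε1.trans_lt ENNReal.one_lt_top).ne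
    set a : ℝ≥0∞ := F2 (Iic t00) with ha_def
    set M : ℝ≥0∞ := μ (Ioi t00) with hM_def
    set b : ℝ≥0∞ := a * ε / M with hb_def
    have haε : a * ε ≠ 0 := mul_ne_zero hF2pos.ne' hε.ne'
    have hb0 : b ≠ 0 := by
      rcases eq_or_ne M 0 with hM | hM
      · rw [hb_def, hM, ENNReal.div_zero haε]
        exact ENNReal.top_ne_zero
      · exact ENNReal.div_ne_zero.mpr ⟨haε, hμfin.ne⟩
    set β : ℝ := (min b 1).toReal with hβ_def
    have hmin_ne_top : min b 1 ≠ ∞ := ne_top_of_le_ne_top ENNReal.one_ne_top (min_le_right _ _)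
    have hminpos : 0 < min b 1 := lt_min (pos_iff_ne_zero.mpr hb0) zero_lt_one
    have hβpos : 0 < β := ENNReal.toReal_pos hminpos.ne' hmin_ne_top
    have hofβ : ENNReal.ofReal β = min b 1 := ENNReal.ofReal_toReal hmin_ne_top
    -- per-n bound
    have perN : ∀ n : ℕ, 1 ≤ n →
        P {ω | ε < ENNReal.ofReal (Real.sqrt n)
            * F2 (Ioo t00 (⨅ i ∈ Finset.range n, Y i ω))}
          ≤ ENNReal.ofReal (Real.exp (-(β * Real.sqrt n))) := by
      intro n hn
      have hsqpos : (0 : ℝ) < Real.sqrt n := Real.sqrt_pos.2 (by exact_mod_cast hn)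
      set sn : ℝ≥0∞ := ENNReal.ofReal (Real.sqrt n) with hsn_def
      have hsn0 : sn ≠ 0 := by simp [hsn_def, hsqpos]
      have hsntop : sn ≠ ∞ := ENNReal.ofReal_ne_top
      set c : ℝ≥0∞ := ε / sn with hc_def
      have hc0 : 0 < c := ENNReal.div_pos hε.ne' hsntop
      set S : Set ℝ≥0∞ := {s | F2 (Ioo t00 s) ≤ c} with hS_def
      have ht00S : t00 ∈ S := by simp [hS_def]
      set u : ℝ≥0∞ := sSup S with hu_def
      have hut00 : t00 ≤ u := le_sSup ht00S
      -- F2 (Ioo t00 u) ≤ c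
      have h2 : F2 (Ioo t00 u) ≤ c := by
        obtain ⟨f, hfmono, hftend, hfS⟩ :=
          exists_seq_tendsto_sSup ⟨t00, ht00S⟩ (OrderTop.bddAbove S)
        have hsub : Ioo t00 u ⊆ ⋃ k, Ioo t00 (f k) := by
          intro x hx
          obtain ⟨k, hk⟩ := (hftend.eventually_const_lt hx.2).exists
          exact mem_iUnion.2 ⟨k, hx.1, hk⟩
        calc F2 (Ioo t00 u) ≤ F2 (⋃ k, Ioo t00 (f k)) := measure_mono hsub
          _ ≤ ⨆ k, F2 (Ioo t00 (f k)) := by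
              have hms : Monotone fun k => Ioo t00 (f k) :=
                fun i j h => Ioo_subset_Ioo_right (hfmono h)
              exact le_of_eq (Directed.measure_iUnion hms.directed_le)
          _ ≤ c := iSup_le fun k => hfS k
      -- sn * c = ε
      have hsnc : sn * c = ε := ENNReal.mul_div_cancel hsn0 hsntop
      -- the event is contained in {∀ i < n, Y i > u}
      have hsubE : {ω | ε < sn * F2 (Ioo t00 (⨅ i ∈ Finset.range n, Y i ω))}
          ⊆ ⋂ i ∈ Finset.range n, Y i ⁻¹' Ioi u := by
        intro ω hω
        simp only [mem_setOf_eq] at hω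
        have hUu : u < ⨅ i ∈ Finset.range n, Y i ω := by
          by_contra hle
          push_neg at hle
          have : F2 (Ioo t00 (⨅ i ∈ Finset.range n, Y i ω)) ≤ c :=
            le_trans (measure_mono (Ioo_subset_Ioo_right hle)) h2
          exact absurd hω (not_lt.2 (hsnc ▸ mul_le_mul_right this sn))
        exact mem_iInter₂.2 fun i hi => lt_of_lt_of_le hUu (iInf₂_le i hi)
      rcases eq_or_ne u ∞ with hutop | hune
      · -- u = ∞: the event is empty
        have : {ω | ε < sn * F2 (Ioo t00 (⨅ i ∈ Finset.range n, Y i ω))} = ∅ := by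
          refine eq_empty_of_subset_empty fun ω hω => ?_
          simp only [mem_setOf_eq] at hω
          have : F2 (Ioo t00 (⨅ i ∈ Finset.range n, Y i ω)) ≤ c :=
            le_trans (measure_mono (Ioo_subset_Ioo_right (hutop ▸ le_top))) h2
          exact absurd hω (not_lt.2 (hsnc ▸ mul_le_mul_right this sn))
        rw [this]
        simp
      -- u < ∞ : main estimate
      · -- c ≤ F2 (Ioc t00 u)
        have h3 : c ≤ F2 (Ioc t00 u) := by
          set v : ℕ → ℝ≥0∞ := fun k => u + ((k : ℝ≥0∞) + 1)⁻¹ with hv_def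
          have hv_gt : ∀ k, u < v k :=
            fun k => ENNReal.lt_add_right hune (by simp)
          have hvc : ∀ k, c < F2 (Ioo t00 (v k)) := by
            intro k
            by_contra hle
            push_neg at hle
            have hmem : v k ∈ S := hle
            exact absurd (le_sSup hmem) (not_le.2 (hv_gt k))
          have hvtend : Tendsto v atTop (nhds u) := by
            have h0 : Tendsto (fun k : ℕ => ((k : ℝ≥0∞) + 1)⁻¹) atTop (nhds 0) := by
              have := ENNReal.tendsto_inv_nat_nhds_zero.comp
                (tendsto_add_atTop_nat 1)
              simpa [Function.comp_def] using this
            simpa using (tendsto_const_nhds.add h0 :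
              Tendsto (fun k : ℕ => u + ((k : ℝ≥0∞) + 1)⁻¹) atTop (nhds (u + 0)))
          have hInter : Ioc t00 u = ⋂ k, Ioo t00 (v k) := by
            ext x
            simp only [mem_Ioc, mem_iInter, mem_Ioo]
            constructor
            · exact fun ⟨h1, h2⟩ k => ⟨h1, lt_of_le_of_lt h2 (hv_gt k)⟩
            · intro hx
              refine ⟨(hx 0).1, ?_⟩
              by_contra hux
              push_neg at hux
              obtain ⟨k, hk⟩ := (hvtend.eventually_lt_const hux).exists
              exact absurd (hx k).2 (not_lt.2 hk.le)
          have hanti : Antitone fun k => Ioo t00 (v k) := by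
            intro i j hij
            refine Ioo_subset_Ioo_right (add_le_add le_rfl ?_)
            refine ENNReal.inv_le_inv.2 ?_
            have hcast : (i : ℝ≥0∞) ≤ (j : ℝ≥0∞) := Nat.cast_le.2 hij
            exact add_le_add hcast le_rfl
          rw [hInter, hanti.measure_iInter (fun k => (measurableSet_Ioo).nullMeasurableSet)
            ⟨0, measure_ne_top _ _⟩]
          exact le_iInf fun k => (hvc k).le
        -- F01 (Iic u) ≠ 0
        have hF01 : F01 (Iic u) ≠ 0 := by
          intro h0
          have hμIoc : μ (Ioc t00 u) = ∞ := by
            rw [hμ _ measurableSet_Ioc]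
            have hcongr : ∀ s ∈ Ioc t00 u, (F01 (Iic s))⁻¹ = (∞ : ℝ≥0∞) := by
              intro s hs
              have : F01 (Iic s) = 0 :=
                le_antisymm (h0 ▸ measure_mono (Iic_subset_Iic.2 hs.2)) zero_le
              simp [this]
            rw [setLIntegral_congr_fun measurableSet_Ioc hcongr,
              setLIntegral_const]
            exact ENNReal.top_mul (ne_of_gt (lt_of_lt_of_le hc0 h3))
          exact absurd (le_trans (le_of_eq hμIoc.symm) (measure_mono Ioc_subset_Ioi_self))
            (not_le.2 hμfin)
        -- F2 (Ioc t00 u) ≤ F01 (Iic u) * μ (Ioc t00 u)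
        have h4 : F2 (Ioc t00 u) ≤ F01 (Iic u) * μ (Ioc t00 u) := by
          rw [hμ _ measurableSet_Ioc, ← lintegral_const_mul' _ _ (measure_ne_top F01 _),
            ← setLIntegral_one]
          refine setLIntegral_mono' measurableSet_Ioc fun s hs => ?_
          rcases eq_or_ne (F01 (Iic s)) 0 with h | h
          · simp [h, ENNReal.mul_top hF01]
          · calc (1 : ℝ≥0∞) = F01 (Iic s) * (F01 (Iic s))⁻¹ :=
                  (ENNReal.mul_inv_cancel h (measure_ne_top _ _)).symm
              _ ≤ F01 (Iic u) * (F01 (Iic s))⁻¹ :=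
                  mul_le_mul_left (measure_mono (Iic_subset_Iic.2 hs.2)) _
        -- c ≤ F01 (Iic u) * M and M ≠ 0
        have h5 : c ≤ F01 (Iic u) * M :=
          h3.trans (h4.trans (mul_le_mul_right (measure_mono Ioc_subset_Ioi_self) _))
        have hM0 : M ≠ 0 := by
          intro hM
          rw [hM, mul_zero] at h5
          exact hc0.ne' (le_antisymm h5 zero_le)
        have h5' : c / M ≤ F01 (Iic u) :=
          (ENNReal.div_le_iff_le_mul (Or.inl hM0) (Or.inl hμfin.ne)).2 h5
        -- H (Iic u) ≥ b / sn
        have hHlow : b / sn ≤ H (Iic u) := by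
          have heq : b / sn = a * (c / M) := by
            simp only [hb_def, hc_def, div_eq_mul_inv]
            ring
          rw [hfac u, heq]
          exact mul_le_mul' (measure_mono (Iic_subset_Iic.2 hut00)) h5'
        have hHlow' : ENNReal.ofReal β / sn ≤ H (Iic u) := by
          refine le_trans ?_ hHlow
          exact ENNReal.div_le_div_right (hofβ ▸ min_le_left _ _) sn
        -- H (Ioi u) ≤ 1 - ofReal β / sn
        have h6 : H (Ioi u) ≤ 1 - ENNReal.ofReal β / sn := by
          have : H (Ioi u) = 1 - H (Iic u) := by
            rw [← compl_Iic]
            exact prob_compl_eq_one_sub measurableSet_Iic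
          rw [this]
          exact tsub_le_tsub_left hHlow' 1
        -- independence: product bound
        have hprod : P (⋂ i ∈ Finset.range n, Y i ⁻¹' Ioi u)
            = ∏ i ∈ Finset.range n, P (Y i ⁻¹' Ioi u) :=
          hindep.meas_biInter fun i _ => ⟨Ioi u, measurableSet_Ioi, rfl⟩
        have hPi : ∀ i, P (Y i ⁻¹' Ioi u) = H (Ioi u) := by
          intro i
          rw [← hiid i, Measure.map_apply (hY i) measurableSet_Ioi]
        -- assemble
        have hreal : (1 : ℝ≥0∞) - ENNReal.ofReal β / sn
            = ENNReal.ofReal (1 - β / Real.sqrt n) := by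
          rw [hsn_def, ← ENNReal.ofReal_div_of_pos hsqpos, ← ENNReal.ofReal_one,
            ← ENNReal.ofReal_sub _ (div_nonneg hβpos.le hsqpos.le)]
        have hexp1 : ENNReal.ofReal (1 - β / Real.sqrt n)
            ≤ ENNReal.ofReal (Real.exp (-(β / Real.sqrt n))) := by
          refine ENNReal.ofReal_le_ofReal ?_
          have := Real.add_one_le_exp (-(β / Real.sqrt n))
          linarith
        have hexp2 : (ENNReal.ofReal (Real.exp (-(β / Real.sqrt n)))) ^ n
            = ENNReal.ofReal (Real.exp (-(β * Real.sqrt n))) := by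
          rw [← ENNReal.ofReal_pow (Real.exp_nonneg _), ← Real.exp_nat_mul]
          congr 1
          rw [mul_neg, mul_div_assoc', mul_comm (n : ℝ) β, mul_div_assoc, Real.div_sqrt]
        calc P {ω | ε < sn * F2 (Ioo t00 (⨅ i ∈ Finset.range n, Y i ω))}
            ≤ P (⋂ i ∈ Finset.range n, Y i ⁻¹' Ioi u) := measure_mono hsubE
          _ = ∏ i ∈ Finset.range n, P (Y i ⁻¹' Ioi u) := hprod
          _ = (H (Ioi u)) ^ n := by
              simp [hPi, Finset.prod_const, Finset.card_range]
          _ ≤ (1 - ENNReal.ofReal β / sn) ^ n := pow_le_pow_left' h6 n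
          _ = (ENNReal.ofReal (1 - β / Real.sqrt n)) ^ n := by rw [hreal]
          _ ≤ (ENNReal.ofReal (Real.exp (-(β / Real.sqrt n)))) ^ n :=
              pow_le_pow_left' hexp1 n
          _ = ENNReal.ofReal (Real.exp (-(β * Real.sqrt n))) := hexp2
    -- the bounding sequence tends to 0
    have hgtend : Tendsto (fun n : ℕ => ENNReal.ofReal (Real.exp (-(β * Real.sqrt n))))
        atTop (nhds 0) := by
      have h1 : Tendsto (fun n : ℕ => β * Real.sqrt n) atTop atTop :=
        (aux_sqrt_nat_tendsto_atTop).const_mul_atTop hβpos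
      have h2 : Tendsto (fun n : ℕ => Real.exp (-(β * Real.sqrt n))) atTop (nhds 0) :=
        Real.tendsto_exp_neg_atTop_nhds_zero.comp h1
      have := (ENNReal.continuous_ofReal.tendsto 0).comp h2
      simpa [Function.comp_def] using this
    refine tendsto_of_tendsto_of_tendsto_of_le_of_le' tendsto_const_nhds hgtend
      (Eventually.of_forall fun n => zero_le) ?_
    filter_upwards [eventually_ge_atTop 1] with n hn using perN n hn
  -- reduce general ε to ε' = min ε 1
  intro ε hε
  set ε' := min ε 1 with hε'_def
  have hε'pos : 0 < ε' := lt_min hε zero_lt_one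
  have hmono : ∀ n : ℕ,
      P {ω | ε < ENNReal.ofReal (Real.sqrt n)
          * F2 (Ioo t00 (⨅ i ∈ Finset.range n, Y i ω))}
      ≤ P {ω | ε' < ENNReal.ofReal (Real.sqrt n)
          * F2 (Ioo t00 (⨅ i ∈ Finset.range n, Y i ω))} := by
    intro n
    refine measure_mono fun ω hω => ?_
    simp only [mem_setOf_eq] at hω ⊢
    exact lt_of_le_of_lt (min_le_left ε 1) hω
  exact tendsto_of_tendsto_of_tendsto_of_le_of_le tendsto_const_nhds
    (key ε' hε'pos (min_le_right _ _)) (fun n => zero_le) hmono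
end

section
/- Monotonicity of product-integration for reverse hazards: if M₁⁻ and M₂⁻ are two predictable reverse hazard measures on [0,∞] with M₁⁻(B) ≤ M₂⁻(B) for all Borel B and atoms at most 1, then the associated distributions satisfy F₁([0,t]) ≥ F₂([0,t]) for all t, where F_k([0,t]) = ∏_{(t,∞]}(1 - M_k⁻(ds)). -/
open MeasureTheory Set ENNReal Filter Topology

private lemma expE_mul (x y : ℝ) :
    ENNReal.ofReal (Real.exp x) * ENNReal.ofReal (Real.exp y)
      = ENNReal.ofReal (Real.exp (x + y)) := by
  rw [← ENNReal.ofReal_mul (Real.exp_nonneg x), ← Real.exp_add]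

private lemma expE_mono {x y : ℝ} (h : x ≤ y) :
    ENNReal.ofReal (Real.exp x) ≤ ENNReal.ofReal (Real.exp y) :=
  ENNReal.ofReal_le_ofReal (Real.exp_le_exp.2 h)

private lemma one_sub_le_mul_exp {a b : ℝ≥0∞} (hab : a ≤ b) (hb : b ≤ 1) :
    1 - b ≤ (1 - a) * ENNReal.ofReal (Real.exp (a.toReal - b.toReal)) := by
  have hbt : b ≠ ∞ := ne_top_of_le_ne_top ENNReal.one_ne_top hb
  have hat : a ≠ ∞ := ne_top_of_le_ne_top hbt hab
  set x := a.toReal with hx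
  set y := b.toReal with hy
  have hx0 : 0 ≤ x := ENNReal.toReal_nonneg
  have hxy : x ≤ y := ENNReal.toReal_mono hbt hab
  have hy1 : y ≤ 1 := by
    have := ENNReal.toReal_mono ENNReal.one_ne_top hb
    simpa using this
  have ha' : a = ENNReal.ofReal x := (ENNReal.ofReal_toReal hat).symm
  have hb' : b = ENNReal.ofReal y := (ENNReal.ofReal_toReal hbt).symm
  rw [ha', hb', ← ENNReal.ofReal_one, ← ENNReal.ofReal_sub _ ENNReal.toReal_nonneg,
    ← ENNReal.ofReal_sub _ ENNReal.toReal_nonneg,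
    ← ENNReal.ofReal_mul (by linarith : (0:ℝ) ≤ 1 - x)]
  apply ENNReal.ofReal_le_ofReal
  have h1 := Real.add_one_le_exp (x - y)
  nlinarith [mul_le_mul_of_nonneg_left h1 (by linarith : (0:ℝ) ≤ 1 - x),
    mul_nonneg hx0 (by linarith : (0:ℝ) ≤ y - x)]

private lemma tprod_eq_iInf {ι : Type*} (f : ι → ℝ≥0∞) (hf : ∀ i, f i ≤ 1) :
    ∏' i, f i = ⨅ F : Finset ι, ∏ i ∈ F, f i := by
  classical
  have hanti : Antitone fun F : Finset ι => ∏ i ∈ F, f i := by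
    intro F G hFG
    show ∏ i ∈ G, f i ≤ ∏ i ∈ F, f i
    rw [← Finset.prod_sdiff hFG]
    exact mul_le_of_le_one_left' (Finset.prod_le_one' fun i _ => hf i)
  exact HasProd.tprod_eq (tendsto_atTop_iInf hanti)

private lemma prod_one_sub_le {ι : Type*} (G : Finset ι) (g f : ι → ℝ≥0∞)
    (hgf : ∀ i, g i ≤ f i) (hf1 : ∀ i, f i ≤ 1) :
    ∏ i ∈ G, (1 - f i) ≤ (∏ i ∈ G, (1 - g i)) *
      ENNReal.ofReal (Real.exp (∑ i ∈ G, (g i).toReal - ∑ i ∈ G, (f i).toReal)) := by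
  calc ∏ i ∈ G, (1 - f i)
      ≤ ∏ i ∈ G, ((1 - g i) * ENNReal.ofReal (Real.exp ((g i).toReal - (f i).toReal))) :=
        Finset.prod_le_prod' fun i _ => one_sub_le_mul_exp (hgf i) (hf1 i)
    _ = (∏ i ∈ G, (1 - g i)) *
        ∏ i ∈ G, ENNReal.ofReal (Real.exp ((g i).toReal - (f i).toReal)) :=
        Finset.prod_mul_distrib
    _ = _ := by
        rw [← ENNReal.ofReal_prod_of_nonneg (fun i _ => Real.exp_nonneg _), ← Real.exp_sum,
          Finset.sum_sub_distrib]

private lemma iInf_prod_one_sub_eq_zero {ι : Type*} (f : ι → ℝ≥0∞) (hf : ∀ i, f i ≤ 1)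
    (h : ∑' i, f i = ∞) : (⨅ F : Finset ι, ∏ i ∈ F, (1 - f i)) = 0 := by
  refine le_antisymm ?_ zero_le
  have key : ∀ n : ℕ, (⨅ F : Finset ι, ∏ i ∈ F, (1 - f i))
      ≤ ENNReal.ofReal (Real.exp (-(n : ℝ))) := by
    intro n
    have hn : ((n : ℝ≥0∞)) < ⨆ F : Finset ι, ∑ i ∈ F, f i := by
      rw [← ENNReal.tsum_eq_iSup_sum, h]
      exact ENNReal.natCast_lt_top n
    obtain ⟨F, hF⟩ := lt_iSup_iff.mp hn
    have hFfin : ∑ i ∈ F, f i ≠ ∞ := by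
      refine ne_top_of_le_ne_top (b := (F.card : ℝ≥0∞)) ?_ ?_
      · exact ENNReal.natCast_ne_top _
      · calc ∑ i ∈ F, f i ≤ ∑ i ∈ F, 1 := Finset.sum_le_sum fun i _ => hf i
          _ = (F.card : ℝ≥0∞) := by simp
    have hstep := prod_one_sub_le F (fun _ => 0) f (fun i => zero_le) hf
    have hsum : (n : ℝ) ≤ ∑ i ∈ F, (f i).toReal := by
      have h1 : ((n : ℝ≥0∞)).toReal ≤ (∑ i ∈ F, f i).toReal :=
        ENNReal.toReal_mono hFfin hF.le
      rw [ENNReal.toReal_sum (fun i _ =>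
        ne_top_of_le_ne_top ENNReal.one_ne_top (hf i))] at h1
      simpa using h1
    calc (⨅ F : Finset ι, ∏ i ∈ F, (1 - f i)) ≤ ∏ i ∈ F, (1 - f i) := iInf_le _ F
      _ ≤ (∏ i ∈ F, (1 - (0:ℝ≥0∞))) *
          ENNReal.ofReal (Real.exp (∑ i ∈ F, (0:ℝ≥0∞).toReal - ∑ i ∈ F, (f i).toReal)) := hstep
      _ = ENNReal.ofReal (Real.exp (-∑ i ∈ F, (f i).toReal)) := by simp
      _ ≤ ENNReal.ofReal (Real.exp (-(n : ℝ))) := expE_mono (by linarith)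
  have htend : Tendsto (fun n : ℕ => ENNReal.ofReal (Real.exp (-(n : ℝ)))) atTop (𝓝 0) := by
    have h1 : Tendsto (fun n : ℕ => Real.exp (-(n : ℝ))) atTop (𝓝 0) :=
      Real.tendsto_exp_neg_atTop_nhds_zero.comp tendsto_natCast_atTop_atTop
    simpa using ENNReal.tendsto_ofReal h1
  exact ge_of_tendsto htend (Eventually.of_forall key)

/-- The continuous factor `exp(-m)` of the product-integral, valued in `ℝ≥0∞`. -/
noncomputable def contFactor (m : ℝ≥0∞) : ℝ≥0∞ :=
  if m = ∞ then 0 else ENNReal.ofReal (Real.exp (-m.toReal))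

/-- The reverse product-integral `∏_{(t,∞]} (1 - μ(ds))` of a reverse hazard measure with
continuous part `μc`: `exp(-μc((t,∞])) ∏_{s > t, μ({s})>0} (1 - μ({s}))`. -/
noncomputable def revProdIntegral (μ μc : Measure ℝ≥0∞) (t : ℝ≥0∞) : ℝ≥0∞ :=
  contFactor (μc (Ioi t)) * ∏' s : ↥(Ioi t ∩ {s | μ {s} ≠ 0}), (1 - μ {(s : ℝ≥0∞)})

/-- monotonicity of product-integration for reverse hazards: if `M₁⁻ ≤ M₂⁻`
as measures, with atoms at most `1`, then the associated distributions satisfy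
`F₁([0,t]) ≥ F₂([0,t])` for all `t`, where `F_k([0,t]) = ∏_{(t,∞]}(1 - M_k⁻(ds))`. -/
theorem revProdIntegral_antitone (M1 M2 M1c M2c : Measure ℝ≥0∞)
    (hatom1 : ∀ s, M1 {s} ≤ 1) (hatom2 : ∀ s, M2 {s} ≤ 1)
    (hc1 : ∀ s, M1c {s} = 0) (hc2 : ∀ s, M2c {s} = 0)
    (hdec1 : ∀ B, MeasurableSet B →
      M1 B = M1c B + ∑' s : ↥(B ∩ {s | M1 {s} ≠ 0}), M1 {(s : ℝ≥0∞)})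
    (hdec2 : ∀ B, MeasurableSet B →
      M2 B = M2c B + ∑' s : ↥(B ∩ {s | M2 {s} ≠ 0}), M2 {(s : ℝ≥0∞)})
    (hle : ∀ B, MeasurableSet B → M1 B ≤ M2 B) :
    ∀ t, revProdIntegral M2 M2c t ≤ revProdIntegral M1 M1c t := by
  intro t
  have hB : MeasurableSet (Ioi t) := measurableSet_Ioi
  have hatomle : ∀ s : ℝ≥0∞, M1 {s} ≤ M2 {s} := fun s => hle _ (measurableSet_singleton s)
  simp only [revProdIntegral]
  set A1 : Set ℝ≥0∞ := Ioi t ∩ {s | M1 {s} ≠ 0} with hA1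
  set A2 : Set ℝ≥0∞ := Ioi t ∩ {s | M2 {s} ≠ 0} with hA2
  have hsub : A1 ⊆ A2 := fun s hs =>
    ⟨hs.1, fun h0 => hs.2 (le_antisymm (h0 ▸ hatomle s) zero_le)⟩
  set m1 := M1c (Ioi t) with hm1def
  set m2 := M2c (Ioi t) with hm2def
  set T1 := ∑' s : ↥A1, M1 {(s : ℝ≥0∞)} with hT1def
  set T2 := ∑' s : ↥A2, M2 {(s : ℝ≥0∞)} with hT2def
  by_cases hm2 : m2 = ∞
  · simp [contFactor, hm2]
  have hc2ne : contFactor m2 = ENNReal.ofReal (Real.exp (-m2.toReal)) := if_neg hm2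
  rw [show (∏' s : ↥A2, (1 - M2 {(s : ℝ≥0∞)}))
        = ⨅ G : Finset ↥A2, ∏ s ∈ G, (1 - M2 {(s : ℝ≥0∞)}) from
      tprod_eq_iInf _ fun s => tsub_le_self,
    show (∏' s : ↥A1, (1 - M1 {(s : ℝ≥0∞)}))
        = ⨅ F : Finset ↥A1, ∏ s ∈ F, (1 - M1 {(s : ℝ≥0∞)}) from
      tprod_eq_iInf _ fun s => tsub_le_self]
  by_cases hT2 : T2 = ∞
  · rw [iInf_prod_one_sub_eq_zero (fun s : ↥A2 => M2 {(s : ℝ≥0∞)}) (fun s => hatom2 _) hT2,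
      mul_zero]
    exact zero_le
  have hM2B : M2 (Ioi t) = m2 + T2 := hdec2 _ hB
  have hM2fin : M2 (Ioi t) ≠ ∞ := by
    rw [hM2B]; exact ENNReal.add_ne_top.mpr ⟨hm2, hT2⟩
  have hM1fin : M1 (Ioi t) ≠ ∞ := ne_top_of_le_ne_top hM2fin (hle _ hB)
  have hM1B : M1 (Ioi t) = m1 + T1 := hdec1 _ hB
  have hm1 : m1 ≠ ∞ := fun h => hM1fin (by rw [hM1B, h, top_add])
  have hT1 : T1 ≠ ∞ := fun h => hM1fin (by rw [hM1B, h, add_top])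
  have hc1ne : contFactor m1 = ENNReal.ofReal (Real.exp (-m1.toReal)) := if_neg hm1
  rw [hc1ne, ENNReal.mul_iInf (fun h => absurd h ENNReal.ofReal_ne_top)]
  refine le_iInf fun F => ?_
  -- pass to the limit ε → 0⁺
  have htend : Tendsto (fun ε : ℝ => ENNReal.ofReal (Real.exp (-m1.toReal)) *
      (∏ a ∈ F, (1 - M1 {(a : ℝ≥0∞)})) * ENNReal.ofReal (Real.exp ε)) (𝓝[>] (0:ℝ))
      (𝓝 (ENNReal.ofReal (Real.exp (-m1.toReal)) * ∏ a ∈ F, (1 - M1 {(a : ℝ≥0∞)}))) := by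
    have h1 : Tendsto (fun ε : ℝ => ENNReal.ofReal (Real.exp ε)) (𝓝[>] (0:ℝ)) (𝓝 1) := by
      have h2 : Tendsto (fun ε : ℝ => ENNReal.ofReal (Real.exp ε)) (𝓝 (0:ℝ))
          (𝓝 (ENNReal.ofReal (Real.exp 0))) :=
        (ENNReal.continuous_ofReal.comp Real.continuous_exp).continuousAt
      simpa [Real.exp_zero] using h2.mono_left nhdsWithin_le_nhds
    have hbne : ENNReal.ofReal (Real.exp (-m1.toReal)) * (∏ a ∈ F, (1 - M1 {(a : ℝ≥0∞)})) ≠ ∞ :=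
      ENNReal.mul_ne_top ENNReal.ofReal_ne_top
        (ne_top_of_le_ne_top ENNReal.one_ne_top (Finset.prod_le_one' fun _ _ => tsub_le_self))
    simpa [mul_one] using ENNReal.Tendsto.const_mul h1 (Or.inr hbne)
  refine ge_of_tendsto htend ?_
  filter_upwards [self_mem_nhdsWithin] with ε (hε : 0 < ε)
  -- the embedded copy of F inside A2
  set e : ↥A1 ↪ ↥A2 := ⟨Set.inclusion hsub, Set.inclusion_injective hsub⟩ with he
  set Fe : Finset ↥A2 := F.map e with hFe
  obtain ⟨G, hFG, hGsum⟩ : ∃ G : Finset ↥A2, Fe ⊆ G ∧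
      T2 ≤ (∑ s ∈ G, M2 {(s : ℝ≥0∞)}) + ENNReal.ofReal ε := by
    by_cases hTε : T2 ≤ ENNReal.ofReal ε
    · exact ⟨Fe, Finset.Subset.refl _, hTε.trans le_add_self⟩
    · push_neg at hTε
      have hεpos : ENNReal.ofReal ε ≠ 0 := (ENNReal.ofReal_pos.2 hε).ne'
      have hT2pos : T2 ≠ 0 := ((ENNReal.ofReal_pos.2 hε).trans hTε).ne'
      have h1 : T2 - ENNReal.ofReal ε < ⨆ G : Finset ↥A2, ∑ s ∈ G, M2 {(s : ℝ≥0∞)} :=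
        (ENNReal.sub_lt_self hT2 hT2pos hεpos).trans_eq
          (hT2def.trans ENNReal.tsum_eq_iSup_sum)
      obtain ⟨G0, hG0⟩ := lt_iSup_iff.mp h1
      refine ⟨G0 ∪ Fe, Finset.subset_union_right, tsub_le_iff_right.mp ?_⟩
      exact hG0.le.trans (Finset.sum_le_sum_of_subset Finset.subset_union_left)
  set g : ↥A2 → ℝ≥0∞ := fun s => if s ∈ Fe then M1 {(s : ℝ≥0∞)} else 0 with hg
  have hgf : ∀ s : ↥A2, g s ≤ M2 {(s : ℝ≥0∞)} := by
    intro s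
    by_cases hs : s ∈ Fe
    · simp only [hg, if_pos hs]; exact hatomle _
    · simp [hg, hs]
  have hFmem : ∀ a ∈ F, e a ∈ Fe := fun a ha => Finset.mem_map_of_mem e ha
  have hprodg : ∏ s ∈ G, (1 - g s) = ∏ a ∈ F, (1 - M1 {(a : ℝ≥0∞)}) := by
    rw [← Finset.prod_sdiff hFG]
    have h1 : ∏ s ∈ G \ Fe, (1 - g s) = 1 :=
      Finset.prod_eq_one fun s hs => by
        simp [hg, (Finset.mem_sdiff.mp hs).2]
    have h2 : ∏ s ∈ Fe, (1 - g s) = ∏ a ∈ F, (1 - M1 {(a : ℝ≥0∞)}) := by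
      rw [hFe, Finset.prod_map]
      refine Finset.prod_congr rfl fun a ha => ?_
      simp only [hg, if_pos (hFmem a ha)]
      rfl
    rw [h1, h2, one_mul]
  have hsumg : ∑ s ∈ G, (g s).toReal = ∑ a ∈ F, (M1 {(a : ℝ≥0∞)}).toReal := by
    rw [← Finset.sum_sdiff hFG]
    have h1 : ∑ s ∈ G \ Fe, (g s).toReal = 0 :=
      Finset.sum_eq_zero fun s hs => by simp [hg, (Finset.mem_sdiff.mp hs).2]
    have h2 : ∑ s ∈ Fe, (g s).toReal = ∑ a ∈ F, (M1 {(a : ℝ≥0∞)}).toReal := by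
      rw [hFe, Finset.sum_map]
      refine Finset.sum_congr rfl fun a ha => ?_
      simp only [hg, if_pos (hFmem a ha)]
      rfl
    rw [h1, h2, zero_add]
  -- the key real inequality
  have hFfin : ∑ a ∈ F, M1 {(a : ℝ≥0∞)} ≠ ∞ :=
    ne_top_of_le_ne_top hT1 (ENNReal.sum_le_tsum F)
  have hGfin : ∑ s ∈ G, M2 {(s : ℝ≥0∞)} ≠ ∞ :=
    ne_top_of_le_ne_top hT2 (ENNReal.sum_le_tsum G)
  have hEnn : m1 + ∑ a ∈ F, M1 {(a : ℝ≥0∞)}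
      ≤ m2 + ((∑ s ∈ G, M2 {(s : ℝ≥0∞)}) + ENNReal.ofReal ε) := by
    calc m1 + ∑ a ∈ F, M1 {(a : ℝ≥0∞)} ≤ m1 + T1 :=
          add_le_add le_rfl (ENNReal.sum_le_tsum F)
      _ = M1 (Ioi t) := hM1B.symm
      _ ≤ M2 (Ioi t) := hle _ hB
      _ = m2 + T2 := hM2B
      _ ≤ _ := add_le_add le_rfl hGsum
  have hkey : -m2.toReal + (∑ a ∈ F, (M1 {(a : ℝ≥0∞)}).toReal
      - ∑ s ∈ G, (M2 {(s : ℝ≥0∞)}).toReal) ≤ -m1.toReal + ε := by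
    have hR : m2 + ((∑ s ∈ G, M2 {(s : ℝ≥0∞)}) + ENNReal.ofReal ε) ≠ ∞ := by
      exact ENNReal.add_ne_top.mpr ⟨hm2, ENNReal.add_ne_top.mpr ⟨hGfin, ENNReal.ofReal_ne_top⟩⟩
    have h1 := ENNReal.toReal_mono hR hEnn
    rw [ENNReal.toReal_add hm1 hFfin, ENNReal.toReal_add hm2
        (ENNReal.add_ne_top.mpr ⟨hGfin, ENNReal.ofReal_ne_top⟩),
      ENNReal.toReal_add hGfin ENNReal.ofReal_ne_top,
      ENNReal.toReal_sum (fun a _ => ne_top_of_le_ne_top ENNReal.one_ne_top (hatom1 _)),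
      ENNReal.toReal_sum (fun s _ => ne_top_of_le_ne_top ENNReal.one_ne_top (hatom2 _)),
      ENNReal.toReal_ofReal hε.le] at h1
    linarith
  calc contFactor m2 * ⨅ G' : Finset ↥A2, ∏ s ∈ G', (1 - M2 {(s : ℝ≥0∞)})
      ≤ contFactor m2 * ∏ s ∈ G, (1 - M2 {(s : ℝ≥0∞)}) := mul_le_mul_of_nonneg_left (iInf_le _ G) zero_le
    _ ≤ contFactor m2 * ((∏ s ∈ G, (1 - g s)) * ENNReal.ofReal
        (Real.exp (∑ s ∈ G, (g s).toReal - ∑ s ∈ G, (M2 {(s : ℝ≥0∞)}).toReal))) :=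
        mul_le_mul_of_nonneg_left (prod_one_sub_le G g _ hgf fun s => hatom2 _) zero_le
    _ = (∏ a ∈ F, (1 - M1 {(a : ℝ≥0∞)})) * (ENNReal.ofReal (Real.exp (-m2.toReal)) *
        ENNReal.ofReal (Real.exp (∑ a ∈ F, (M1 {(a : ℝ≥0∞)}).toReal
          - ∑ s ∈ G, (M2 {(s : ℝ≥0∞)}).toReal))) := by
        rw [hc2ne, hprodg, hsumg]; ring
    _ = (∏ a ∈ F, (1 - M1 {(a : ℝ≥0∞)})) * ENNReal.ofReal
        (Real.exp (-m2.toReal + (∑ a ∈ F, (M1 {(a : ℝ≥0∞)}).toReal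
          - ∑ s ∈ G, (M2 {(s : ℝ≥0∞)}).toReal))) := by rw [expE_mul]
    _ ≤ (∏ a ∈ F, (1 - M1 {(a : ℝ≥0∞)})) * ENNReal.ofReal (Real.exp (-m1.toReal + ε)) :=
        mul_le_mul_of_nonneg_left (expE_mono hkey) zero_le
    _ = ENNReal.ofReal (Real.exp (-m1.toReal)) * (∏ a ∈ F, (1 - M1 {(a : ℝ≥0∞)})) *
        ENNReal.ofReal (Real.exp ε) := by
        rw [← expE_mul]; ring
end
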